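/- arXiv:2503.06982 — 9 statements merged into one kernel-verified Lean document; each statement's English description precedes it below -/
import Mathlib

section
/- Let u ∈ ℝ^m, v ∈ ℝ^n, g ∈ ℝ^h be unit vectors, σ, σ_{W₂} ∈ ℝ, and W₁ ∈ ℝ^{h×n}, W₂ ∈ ℝ^{m×h} with W₂ᵀu = σ_{W₂} g. Set ΔY = σ u vᵀ. Let A₁ : ℝ → ℝ^{r×n}, B₁ : ℝ → ℝ^{h×r}, A₂ : ℝ → ℝ^{r×h}, B₂ : ℝ → ℝ^{m×r} be differentiable curves, and define F(t) = W₂B₁A₁ + B₂A₂W₁ + B₂A₂B₁A₁ and E(t) = ΔY − F(t). Suppose the curves satisfy the gradient-flow equations Ḃ₁ = (W₂+B₂A₂)ᵀE A₁ᵀ and Ȧ₁ = B₁ᵀ(W₂+B₂A₂)ᵀE. Then the stacked matrix Z₁(t) = [B₁(t); A₁(t)ᵀ] ∈ ℝ^{(h+n)×r} satisfies Ż₁(t) = (σσ_{W₂} H₁ + D̂₁(t)) Z₁(t), where H₁ = [[0, gvᵀ],[vgᵀ, 0]] ∈ ℝ^{(h+n)×(h+n)}, D₁(t) = A₂ᵀB₂ᵀE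 − W₂ᵀF, and D̂₁(t) = [[0, D₁(t)],[D₁(t)ᵀ, 0]]. -/
open Matrix

/-- Under the LoRA gradient-flow equations, the stacked matrix
`Z₁(t) = [B₁(t); A₁(t)ᵀ]` satisfies `Ż₁ = (σ σ_{W₂} H₁ + D̂₁(t)) Z₁(t)`, where
`H₁ = [[0, gvᵀ],[vgᵀ,0]]`, `D₁ = A₂ᵀB₂ᵀE − W₂ᵀF` and `D̂₁ = [[0,D₁],[D₁ᵀ,0]]`. -/
theorem lora_dynamics_decomposition (m n h r : ℕ)
    (u : Fin m → ℝ) (v : Fin n → ℝ) (g : Fin h → ℝ)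
    (hu : ∑ i, u i ^ 2 = 1) (hv : ∑ i, v i ^ 2 = 1) (hg : ∑ i, g i ^ 2 = 1)
    (σ σW₂ : ℝ)
    (W₁ : Matrix (Fin h) (Fin n) ℝ) (W₂ : Matrix (Fin m) (Fin h) ℝ)
    (hW₂u : W₂ᵀ *ᵥ u = σW₂ • g)
    (ΔY : Matrix (Fin m) (Fin n) ℝ) (hΔY : ΔY = σ • vecMulVec u v)
    (A₁ : ℝ → Matrix (Fin r) (Fin n) ℝ) (B₁ : ℝ → Matrix (Fin h) (Fin r) ℝ)
    (A₂ : ℝ → Matrix (Fin r) (Fin h) ℝ) (B₂ : ℝ → Matrix (Fin m) (Fin r) ℝ)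
    (F E : ℝ → Matrix (Fin m) (Fin n) ℝ)
    (hF : ∀ t, F t = W₂ * B₁ t * A₁ t + B₂ t * A₂ t * W₁ + B₂ t * A₂ t * B₁ t * A₁ t)
    (hE : ∀ t, E t = ΔY - F t)
    (hB₁ : ∀ t i j, HasDerivAt (fun s => B₁ s i j)
      (((W₂ + B₂ t * A₂ t)ᵀ * E t * (A₁ t)ᵀ) i j) t)
    (hA₁ : ∀ t i j, HasDerivAt (fun s => A₁ s i j)
      (((B₁ t)ᵀ * (W₂ + B₂ t * A₂ t)ᵀ * E t) i j) t)
    (Z₁ : ℝ → Matrix (Fin h ⊕ Fin n) (Fin r) ℝ)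
    (hZ₁ : ∀ t, Z₁ t = Matrix.fromRows (B₁ t) (A₁ t)ᵀ)
    (H₁ : Matrix (Fin h ⊕ Fin n) (Fin h ⊕ Fin n) ℝ)
    (hH₁ : H₁ = Matrix.fromBlocks 0 (vecMulVec g v) (vecMulVec v g) 0)
    (D₁ : ℝ → Matrix (Fin h) (Fin n) ℝ)
    (hD₁ : ∀ t, D₁ t = (A₂ t)ᵀ * (B₂ t)ᵀ * E t - W₂ᵀ * F t)
    (Dhat : ℝ → Matrix (Fin h ⊕ Fin n) (Fin h ⊕ Fin n) ℝ)
    (hDhat : ∀ t, Dhat t = Matrix.fromBlocks 0 (D₁ t) (D₁ t)ᵀ 0) :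
    ∀ t i j, HasDerivAt (fun s => Z₁ s i j)
      ((((σ * σW₂) • H₁ + Dhat t) * Z₁ t) i j) t := by
  intro t i j
  have key : (W₂ + B₂ t * A₂ t)ᵀ * E t = (σ * σW₂) • vecMulVec g v + D₁ t := by
    have hWu : W₂ᵀ * vecMulVec u v = vecMulVec (W₂ᵀ *ᵥ u) v := by
      ext i j
      simp [mul_apply, vecMulVec_apply, mulVec, dotProduct, Finset.sum_mul, mul_assoc]
    rw [hD₁, hE, hΔY, transpose_add, Matrix.add_mul, transpose_mul,
      Matrix.mul_sub, Matrix.mul_sub, Matrix.mul_smul, hWu, hW₂u]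
    ext i j
    simp [vecMulVec_apply, smul_eq_mul]
    ring
  have hmat : ((σ * σW₂) • H₁ + Dhat t) * Z₁ t =
      Matrix.fromRows ((W₂ + B₂ t * A₂ t)ᵀ * E t * (A₁ t)ᵀ)
        ((B₁ t)ᵀ * (W₂ + B₂ t * A₂ t)ᵀ * E t)ᵀ := by
    rw [hZ₁, hH₁, hDhat, Matrix.add_mul, Matrix.smul_mul,
      Matrix.fromBlocks_mul_fromRows, Matrix.fromBlocks_mul_fromRows]
    have h1 : (W₂ + B₂ t * A₂ t)ᵀ * E t * (A₁ t)ᵀ =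
        ((σ * σW₂) • vecMulVec g v + D₁ t) * (A₁ t)ᵀ := by rw [key]
    have h2 : ((B₁ t)ᵀ * (W₂ + B₂ t * A₂ t)ᵀ * E t)ᵀ =
        ((σ * σW₂) • vecMulVec v g + (D₁ t)ᵀ) * B₁ t := by
      have hvg : (vecMulVec g v)ᵀ = vecMulVec v g := by
        ext i j; simp [vecMulVec_apply, mul_comm]
      rw [Matrix.mul_assoc, transpose_mul, key, transpose_add, transpose_smul, hvg,
        transpose_transpose]
    rw [h1, h2]
    ext (i | i) j <;>
      simp [Matrix.add_mul, Matrix.smul_mul]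
  rw [hmat]
  cases i with
  | inl i =>
    have hd := hB₁ t i j
    have : (fun s => Z₁ s (Sum.inl i) j) = fun s => B₁ s i j := by
      ext s; rw [hZ₁]; rfl
    rw [this]
    exact hd
  | inr i =>
    have hd := hA₁ t j i
    have : (fun s => Z₁ s (Sum.inr i) j) = fun s => A₁ s j i := by
      ext s; rw [hZ₁]; rfl
    rw [this]
    exact hd
end

section
/- Let g ∈ ℝ^h and v ∈ ℝ^n be unit vectors, H₁ = [[0, gvᵀ],[vgᵀ, 0]], γ₁ = (1/√2)·[g; v], γ̄₁ = (1/√2)·[g; −v], and let c ∈ ℝ. If Z : ℝ → ℝ^{(h+n)×r} is a differentiable curve satisfying Ż(t) = c·H₁·Z(t) for all t, then for all t: Z(t) = e^{ct}·γ₁γ₁ᵀZ(0) + e^{−ct}·γ̄₁γ̄₁ᵀZ(0) + (I − γ₁γ₁ᵀ − γ̄₁γ̄₁ᵀ)·Z(0). -/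
open Matrix

lemma ode_exp (k : ℝ) (f : ℝ → ℝ) (hf : ∀ t, HasDerivAt f (k * f t) t) (t : ℝ) :
    f t = Real.exp (k * t) * f 0 := by
  have key : ∀ s : ℝ, HasDerivAt (fun u => Real.exp (-(k * u)) * f u) 0 s := by
    intro s
    have h0 : HasDerivAt (fun u : ℝ => -(k * u)) (-k) s := by
      simpa using ((hasDerivAt_id s).const_mul k).fun_neg
    have h1 : HasDerivAt (fun u => Real.exp (-(k * u))) (Real.exp (-(k * s)) * (-k)) s :=
      h0.exp
    have := h1.fun_mul (hf s)
    refine this.congr_deriv ?_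
    ring
  have hd : Differentiable ℝ (fun u => Real.exp (-(k * u)) * f u) :=
    fun s => (key s).differentiableAt
  have hc := is_const_of_deriv_eq_zero hd (fun x => (key x).deriv) t 0
  simp only [mul_zero, neg_zero, Real.exp_zero, one_mul] at hc
  calc f t = Real.exp (k * t) * (Real.exp (-(k * t)) * f t) := by
        rw [← mul_assoc, ← Real.exp_add]; simp
    _ = Real.exp (k * t) * f 0 := by rw [hc]

lemma vmv_mul_vmv {m : Type*} [Fintype m] (a b c d : m → ℝ) :
    vecMulVec a b * vecMulVec c d = (b ⬝ᵥ c) • vecMulVec a d := by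
  ext i j
  simp [Matrix.mul_apply, vecMulVec_apply, dotProduct, Finset.sum_mul, Finset.mul_sum]
  congr 1; ext k; ring

lemma deriv_mul_entry {m r : Type*} [Fintype m] [Fintype r] [DecidableEq m]
    (M : Matrix m m ℝ) (Z : ℝ → Matrix m r ℝ) (D : Matrix m r ℝ) (t : ℝ)
    (hZ : ∀ i j, HasDerivAt (fun s => Z s i j) (D i j) t) (i : m) (j : r) :
    HasDerivAt (fun s => (M * Z s) i j) ((M * D) i j) t := by
  simp only [Matrix.mul_apply]
  exact HasDerivAt.fun_sum fun k _ => (hZ k j).const_mul (M i k)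

/-- Closed-form solution of the simplified LoRA alignment dynamics
`Ż = c H₁ Z`: the component along `γ₁` grows like `e^{ct}`, the component along `γ̄₁`
decays like `e^{−ct}`, and the component in the kernel of `H₁` is constant. -/
theorem simplified_dynamics_closed_form (h n r : ℕ)
    (g : Fin h → ℝ) (v : Fin n → ℝ)
    (hg : ∑ i, g i ^ 2 = 1) (hv : ∑ i, v i ^ 2 = 1)
    (H₁ : Matrix (Fin h ⊕ Fin n) (Fin h ⊕ Fin n) ℝ)
    (hH₁ : H₁ = Matrix.fromBlocks 0 (vecMulVec g v) (vecMulVec v g) 0)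
    (γ₁ γbar₁ : Fin h ⊕ Fin n → ℝ)
    (hγ₁ : γ₁ = (Real.sqrt 2)⁻¹ • Sum.elim g v)
    (hγbar₁ : γbar₁ = (Real.sqrt 2)⁻¹ • Sum.elim g (-v))
    (c : ℝ)
    (Z : ℝ → Matrix (Fin h ⊕ Fin n) (Fin r) ℝ)
    (hZ : ∀ t i j, HasDerivAt (fun s => Z s i j) ((c • (H₁ * Z t)) i j) t) :
    ∀ t, Z t = Real.exp (c * t) • (vecMulVec γ₁ γ₁ * Z 0)
      + Real.exp (-(c * t)) • (vecMulVec γbar₁ γbar₁ * Z 0)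
      + (1 - vecMulVec γ₁ γ₁ - vecMulVec γbar₁ γbar₁) * Z 0 := by
  set P := vecMulVec γ₁ γ₁ with hP
  set Q := vecMulVec γbar₁ γbar₁ with hQ
  have hhalf : (Real.sqrt 2)⁻¹ * (Real.sqrt 2)⁻¹ = 2⁻¹ := by
    rw [← mul_inv]
    norm_num [Real.mul_self_sqrt]
  -- dot products
  have hγγ : γ₁ ⬝ᵥ γ₁ = 1 := by
    subst hγ₁
    simp only [dotProduct, Fintype.sum_sum_type, Pi.smul_apply, Sum.elim_inl, Sum.elim_inr,
      smul_eq_mul]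
    have e1 : ∀ i, (Real.sqrt 2)⁻¹ * g i * ((Real.sqrt 2)⁻¹ * g i) = 2⁻¹ * g i ^ 2 := by
      intro i; rw [← hhalf]; ring
    have e2 : ∀ i, (Real.sqrt 2)⁻¹ * v i * ((Real.sqrt 2)⁻¹ * v i) = 2⁻¹ * v i ^ 2 := by
      intro i; rw [← hhalf]; ring
    simp only [e1, e2, ← Finset.mul_sum, hg, hv]
    norm_num
  have hγbγb : γbar₁ ⬝ᵥ γbar₁ = 1 := by
    subst hγbar₁
    simp only [dotProduct, Fintype.sum_sum_type, Pi.smul_apply, Sum.elim_inl, Sum.elim_inr,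
      smul_eq_mul, Pi.neg_apply]
    have e1 : ∀ i, (Real.sqrt 2)⁻¹ * g i * ((Real.sqrt 2)⁻¹ * g i) = 2⁻¹ * g i ^ 2 := by
      intro i; rw [← hhalf]; ring
    have e2 : ∀ i, (Real.sqrt 2)⁻¹ * -v i * ((Real.sqrt 2)⁻¹ * -v i) = 2⁻¹ * v i ^ 2 := by
      intro i; rw [← hhalf]; ring
    simp only [e1, e2, ← Finset.mul_sum, hg, hv]
    norm_num
  have hγγb : γ₁ ⬝ᵥ γbar₁ = 0 := by
    subst hγ₁ hγbar₁
    simp only [dotProduct, Fintype.sum_sum_type, Pi.smul_apply, Sum.elim_inl, Sum.elim_inr,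
      smul_eq_mul, Pi.neg_apply]
    have e1 : ∀ i, (Real.sqrt 2)⁻¹ * g i * ((Real.sqrt 2)⁻¹ * g i) = 2⁻¹ * g i ^ 2 := by
      intro i; rw [← hhalf]; ring
    have e2 : ∀ i, (Real.sqrt 2)⁻¹ * v i * ((Real.sqrt 2)⁻¹ * -v i) = -(2⁻¹ * v i ^ 2) := by
      intro i; rw [← hhalf]; ring
    simp only [e1, e2, ← Finset.mul_sum, Finset.sum_neg_distrib, hg, hv]
    norm_num
  have hγbγ : γbar₁ ⬝ᵥ γ₁ = 0 := by
    rw [dotProduct_comm]; exact hγγb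
  -- H₁ = P - Q
  have hPQ : H₁ = P - Q := by
    rw [hH₁, hP, hQ, hγ₁, hγbar₁]
    ext i j
    rcases i with i | i <;> rcases j with j | j <;>
        simp only [Matrix.sub_apply, vecMulVec_apply, Pi.smul_apply, Sum.elim_inl, Sum.elim_inr,
          smul_eq_mul, Pi.neg_apply, Matrix.fromBlocks_apply₁₁, Matrix.fromBlocks_apply₁₂,
          Matrix.fromBlocks_apply₂₁, Matrix.fromBlocks_apply₂₂, Matrix.zero_apply]
    · ring
    · linear_combination (-(2 * g i * v j)) * hhalf
    · linear_combination (-(2 * v i * g j)) * hhalf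
    · ring
  have hPP : P * P = P := by rw [hP, vmv_mul_vmv, hγγ, one_smul]
  have hQQ : Q * Q = Q := by rw [hQ, vmv_mul_vmv, hγbγb, one_smul]
  have hPQ0 : P * Q = 0 := by rw [hP, hQ, vmv_mul_vmv, hγγb, zero_smul]
  have hQP0 : Q * P = 0 := by rw [hP, hQ, vmv_mul_vmv, hγbγ, zero_smul]
  have hPH : P * H₁ = P := by rw [hPQ, Matrix.mul_sub, hPP, hPQ0, sub_zero]
  have hQH : Q * H₁ = -Q := by rw [hPQ, Matrix.mul_sub, hQQ, hQP0, zero_sub]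
  set K : Matrix (Fin h ⊕ Fin n) (Fin h ⊕ Fin n) ℝ := 1 - P - Q with hK
  have hKH : K * H₁ = 0 := by
    rw [hK, Matrix.sub_mul, Matrix.sub_mul, Matrix.one_mul, hPH, hQH, hPQ]
    abel
  intro t
  -- entrywise solutions
  have sol1 : ∀ i j, (P * Z t) i j = Real.exp (c * t) * (P * Z 0) i j := by
    intro i j
    refine ode_exp c (fun s => (P * Z s) i j) (fun s => ?_) t
    have hd := deriv_mul_entry P Z (c • (H₁ * Z s)) s (hZ s) i j
    have : (P * (c • (H₁ * Z s))) i j = c * (P * Z s) i j := by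
      rw [Matrix.mul_smul, ← Matrix.mul_assoc, hPH]
      simp
    rwa [this] at hd
  have sol2 : ∀ i j, (Q * Z t) i j = Real.exp (-c * t) * (Q * Z 0) i j := by
    intro i j
    refine ode_exp (-c) (fun s => (Q * Z s) i j) (fun s => ?_) t
    have hd := deriv_mul_entry Q Z (c • (H₁ * Z s)) s (hZ s) i j
    have : (Q * (c • (H₁ * Z s))) i j = -c * (Q * Z s) i j := by
      rw [Matrix.mul_smul, ← Matrix.mul_assoc, hQH]
      simp
    rwa [this] at hd
  have sol3 : ∀ (i : Fin h ⊕ Fin n) (j : Fin r), (K * Z t) i j = (K * Z 0) i j := by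
    intro i j
    have key : ∀ s : ℝ, HasDerivAt (fun u => (K * Z u) i j)
        ((0 : ℝ) * (K * Z s) i j) s := by
      intro s
      have hd := deriv_mul_entry K Z (c • (H₁ * Z s)) s (hZ s) i j
      have he : (K * (c • (H₁ * Z s))) i j
          = 0 * (K * Z s) i j := by
        rw [Matrix.mul_smul, ← Matrix.mul_assoc, hKH]
        simp
      rwa [he] at hd
    have := ode_exp 0 (fun u => (K * Z u) i j) key t
    simpa using this
  have decomp : Z t = P * Z t + Q * Z t + K * Z t := by
    rw [← Matrix.add_mul, ← Matrix.add_mul]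
    have hone : P + Q + K = 1 := by rw [hK]; abel
    rw [hone, Matrix.one_mul]
  rw [decomp]
  ext i j
  simp only [Matrix.add_apply, Matrix.smul_apply, smul_eq_mul]
  rw [sol1 i j, sol2 i j, sol3 i j]
  ring_nf
end

section
/- Let u ∈ ℝ^m, g ∈ ℝ^h, v ∈ ℝ^n be unit vectors, and set H₁ = [[0, gvᵀ],[vgᵀ, 0]] ∈ ℝ^{(h+n)×(h+n)}, H₂ = [[0, ugᵀ],[guᵀ, 0]] ∈ ℝ^{(m+h)×(m+h)}, γ₁ = (1/√2)·[g; v], γ₂ = (1/√2)·[u; g]. Let c₁, c₂ ∈ ℝ and let Z₁ : ℝ → ℝ^{(h+n)×r}, Z₂ : ℝ → ℝ^{(m+h)×r} be differentiable curves with Ż₁ = c₁H₁Z₁ and Ż₂ = c₂H₂Z₂. Then γ₁ᵀZ₁(t) = e^{c₁t}·γ₁ᵀZ₁(0) and γ₂ᵀZ₂(t) = e^{c₂t}·γ₂ᵀZ₂(0) for all t; consequently, if γ₂ᵀZ₂(0) ≠ 0, then ‖γ₁ᵀZ₁(t)‖² / ‖γ₂ᵀZ₂(t)‖² = e^{2(c₁−c₂)t}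 · ‖γ₁ᵀZ₁(0)‖² / ‖γ₂ᵀZ₂(0)‖² for all t. -/
open Matrix

/-- Scalar linear ODE: if `f' = c f` then `f t = exp (c t) * f 0`. -/
lemma exp_of_hasDerivAt (c : ℝ) (f : ℝ → ℝ)
    (hf : ∀ t, HasDerivAt f (c * f t) t) (t : ℝ) :
    f t = Real.exp (c * t) * f 0 := by
  set F : ℝ → ℝ := fun s => Real.exp (-c * s) * f s with hF
  have hF' : ∀ s, HasDerivAt F 0 s := by
    intro s
    have h1 : HasDerivAt (fun s : ℝ => Real.exp (-c * s)) (-c * Real.exp (-c * s)) s := by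
      simpa [mul_comm] using ((hasDerivAt_id s).const_mul (-c)).exp
    have := h1.fun_mul (hf s)
    exact this.congr_deriv (by ring)
  have hconst : F t = F 0 := by
    apply is_const_of_deriv_eq_zero (fun s => (hF' s).differentiableAt)
    intro s; exact (hF' s).deriv
  have h0 : F 0 = f 0 := by simp [hF]
  have ht : Real.exp (-c * t) * f t = f 0 := by rw [← h0, ← hconst]
  have hne : Real.exp (-c * t) ≠ 0 := Real.exp_ne_zero _
  calc f t = Real.exp (c * t) * (Real.exp (-c * t) * f t) := by
        rw [← mul_assoc, ← Real.exp_add]; simp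
    _ = Real.exp (c * t) * f 0 := by rw [ht]

/-- The unit vector `Sum.elim a b` is a 1-eigenvector (on the left) of the block matrix. -/
lemma elim_vecMul_fromBlocks {p q : ℕ} (a : Fin p → ℝ) (b : Fin q → ℝ)
    (ha : ∑ i, a i ^ 2 = 1) (hb : ∑ i, b i ^ 2 = 1) :
    Sum.elim a b ᵥ* Matrix.fromBlocks 0 (vecMulVec a b) (vecMulVec b a) 0
      = Sum.elim a b := by
  rw [vecMul_fromBlocks]
  have haa : ∀ j, (a ᵥ* vecMulVec a b) j = b j := by
    intro j
    simp only [vecMul, dotProduct, vecMulVec_apply]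
    have : ∀ i, a i * (a i * b j) = a i ^ 2 * b j := by intro i; ring
    simp_rw [this, ← Finset.sum_mul, ha, one_mul]
  have hbb : ∀ j, (b ᵥ* vecMulVec b a) j = a j := by
    intro j
    simp only [vecMul, dotProduct, vecMulVec_apply]
    have : ∀ i, b i * (b i * a j) = b i ^ 2 * a j := by intro i; ring
    simp_rw [this, ← Finset.sum_mul, hb, one_mul]
  ext (i | i) <;> simp [haa, hbb]

/-- If `γ` is a left 1-eigenvector of `H` and `Ż = c H Z`, then `γᵀZ(t) = e^{ct} γᵀZ(0)`. -/
lemma signal_growth_s4 {p : Type*} [Fintype p] {r : ℕ} (γ : p → ℝ) (H : Matrix p p ℝ)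
    (hγH : γ ᵥ* H = γ) (c : ℝ) (Z : ℝ → Matrix p (Fin r) ℝ)
    (hZ : ∀ t i j, HasDerivAt (fun s => Z s i j) ((c • (H * Z t)) i j) t)
    (t : ℝ) : γ ᵥ* Z t = Real.exp (c * t) • (γ ᵥ* Z 0) := by
  ext j
  have key : ∀ s, HasDerivAt (fun s' => (γ ᵥ* Z s') j) (c * (γ ᵥ* Z s) j) s := by
    intro s
    have h1 : HasDerivAt (fun s' => ∑ i, γ i * Z s' i j)
        (∑ i, γ i * (c • (H * Z s)) i j) s :=
      HasDerivAt.fun_sum fun i _ => (hZ s i j).const_mul (γ i)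
    have h2 : (∑ i, γ i * (c • (H * Z s)) i j) = c * (γ ᵥ* Z s) j := by
      have : (∑ i, γ i * (c • (H * Z s)) i j) = c * (γ ᵥ* (H * Z s)) j := by
        simp only [Matrix.smul_apply, smul_eq_mul, vecMul, dotProduct,
          Finset.mul_sum]
        congr 1; ext i; ring
      rw [this, ← Matrix.vecMul_vecMul, hγH]
    rw [h2] at h1
    simpa [vecMul, dotProduct] using h1
  have := exp_of_hasDerivAt c (fun s => (γ ᵥ* Z s) j) key t
  simpa using this

/-- Under the simplified dynamics `Ż₁ = c₁H₁Z₁` and `Ż₂ = c₂H₂Z₂`,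
the signal components satisfy `γ₁ᵀZ₁(t) = e^{c₁t} γ₁ᵀZ₁(0)` and
`γ₂ᵀZ₂(t) = e^{c₂t} γ₂ᵀZ₂(0)`; hence, if `γ₂ᵀZ₂(0) ≠ 0`, the ratio of the squared norms
grows like `e^{2(c₁−c₂)t}`. -/
theorem signal_component_growth (m h n r : ℕ)
    (u : Fin m → ℝ) (g : Fin h → ℝ) (v : Fin n → ℝ)
    (hu : ∑ i, u i ^ 2 = 1) (hg : ∑ i, g i ^ 2 = 1) (hv : ∑ i, v i ^ 2 = 1)
    (H₁ : Matrix (Fin h ⊕ Fin n) (Fin h ⊕ Fin n) ℝ)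
    (hH₁ : H₁ = Matrix.fromBlocks 0 (vecMulVec g v) (vecMulVec v g) 0)
    (H₂ : Matrix (Fin m ⊕ Fin h) (Fin m ⊕ Fin h) ℝ)
    (hH₂ : H₂ = Matrix.fromBlocks 0 (vecMulVec u g) (vecMulVec g u) 0)
    (γ₁ : Fin h ⊕ Fin n → ℝ) (hγ₁ : γ₁ = (Real.sqrt 2)⁻¹ • Sum.elim g v)
    (γ₂ : Fin m ⊕ Fin h → ℝ) (hγ₂ : γ₂ = (Real.sqrt 2)⁻¹ • Sum.elim u g)
    (c₁ c₂ : ℝ)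
    (Z₁ : ℝ → Matrix (Fin h ⊕ Fin n) (Fin r) ℝ)
    (Z₂ : ℝ → Matrix (Fin m ⊕ Fin h) (Fin r) ℝ)
    (hZ₁ : ∀ t i j, HasDerivAt (fun s => Z₁ s i j) ((c₁ • (H₁ * Z₁ t)) i j) t)
    (hZ₂ : ∀ t i j, HasDerivAt (fun s => Z₂ s i j) ((c₂ • (H₂ * Z₂ t)) i j) t) :
    (∀ t, γ₁ ᵥ* Z₁ t = Real.exp (c₁ * t) • (γ₁ ᵥ* Z₁ 0)) ∧
    (∀ t, γ₂ ᵥ* Z₂ t = Real.exp (c₂ * t) • (γ₂ ᵥ* Z₂ 0)) ∧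
    (γ₂ ᵥ* Z₂ 0 ≠ 0 →
      ∀ t, (∑ j, (γ₁ ᵥ* Z₁ t) j ^ 2) / (∑ j, (γ₂ ᵥ* Z₂ t) j ^ 2)
        = Real.exp (2 * (c₁ - c₂) * t)
          * ((∑ j, (γ₁ ᵥ* Z₁ 0) j ^ 2) / (∑ j, (γ₂ ᵥ* Z₂ 0) j ^ 2))) := by
  -- The key eigenvector identities
  have hγ₁H : γ₁ ᵥ* H₁ = γ₁ := by
    rw [hγ₁, hH₁, Matrix.smul_vecMul, elim_vecMul_fromBlocks g v hg hv]
  have hγ₂H : γ₂ ᵥ* H₂ = γ₂ := by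
    rw [hγ₂, hH₂, Matrix.smul_vecMul, elim_vecMul_fromBlocks u g hu hg]
  have key₁ : ∀ t, γ₁ ᵥ* Z₁ t = Real.exp (c₁ * t) • (γ₁ ᵥ* Z₁ 0) := by
    -- indices are over `Fin h ⊕ Fin n`, use equiv to `Fin (h+n)`? No: generalize lemma.
    intro t
    exact signal_growth_s4 γ₁ H₁ hγ₁H c₁ Z₁ hZ₁ t
  have key₂ : ∀ t, γ₂ ᵥ* Z₂ t = Real.exp (c₂ * t) • (γ₂ ᵥ* Z₂ 0) := by
    intro t
    exact signal_growth_s4 γ₂ H₂ hγ₂H c₂ Z₂ hZ₂ t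
  refine ⟨key₁, key₂, ?_⟩
  intro hne t
  obtain ⟨j₀, hj₀⟩ := Function.ne_iff.mp hne
  have hS₂ : (0 : ℝ) < ∑ j, (γ₂ ᵥ* Z₂ 0) j ^ 2 :=
    Finset.sum_pos' (fun j _ => sq_nonneg _)
      ⟨j₀, Finset.mem_univ j₀, (sq_nonneg _).lt_of_ne (Ne.symm (pow_ne_zero 2 hj₀))⟩
  have hS₂ne : (∑ j, (γ₂ ᵥ* Z₂ 0) j ^ 2) ≠ 0 := ne_of_gt hS₂
  have e₁ : (∑ j, (γ₁ ᵥ* Z₁ t) j ^ 2)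
      = Real.exp (c₁ * t) ^ 2 * ∑ j, (γ₁ ᵥ* Z₁ 0) j ^ 2 := by
    rw [key₁ t, Finset.mul_sum]
    congr 1; ext j; simp [mul_pow]
  have e₂ : (∑ j, (γ₂ ᵥ* Z₂ t) j ^ 2)
      = Real.exp (c₂ * t) ^ 2 * ∑ j, (γ₂ ᵥ* Z₂ 0) j ^ 2 := by
    rw [key₂ t, Finset.mul_sum]
    congr 1; ext j; simp [mul_pow]
  rw [e₁, e₂]
  have hexp : Real.exp (c₁ * t) ^ 2 / Real.exp (c₂ * t) ^ 2
      = Real.exp (2 * (c₁ - c₂) * t) := by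
    rw [← Real.exp_nat_mul, ← Real.exp_nat_mul, ← Real.exp_sub]
    ring_nf
  rw [mul_div_mul_comm, hexp]
end

section
/- Let g ∈ ℝ^h and v ∈ ℝ^n be unit vectors, c ≥ 0, q ≥ 0, and let D : ℝ → ℝ^{h×n}. Let A₁ : ℝ → ℝ^{r×n} and B₁ : ℝ → ℝ^{h×r} be differentiable curves satisfying Ḃ₁ = (c·gvᵀ + D(t))·A₁ᵀ and Ȧ₁ = B₁ᵀ·(c·gvᵀ + D(t)). Set γ₁ = (1/√2)·[g; v] and let w_j(t) ∈ ℝ^{h+n} denote the j-th column of Z₁(t) = [B₁(t); A₁(t)ᵀ]. Fix a time t and suppose ⟨γ₁, w_j(t)⟩ ≥ q·‖w_j(t)‖ for every j = 1,…,r. Then d/dt (gᵀB₁(t)A₁(t)v) ≥ (c·q² − ‖D(t)‖)·(‖A₁(t)‖_F² + ‖B₁(t)‖_F²), where ‖D(t)‖ denotes the spectral norm. -/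
open Matrix

noncomputable def frobSq {m n : Type*} [Fintype m] [Fintype n]
    (A : Matrix m n ℝ) : ℝ :=
  ∑ i, ∑ j, A i j ^ 2

noncomputable def specNorm {m n : Type*} [Fintype m] [Fintype n] [DecidableEq n]
    (A : Matrix m n ℝ) : ℝ :=
  ‖LinearMap.toContinuousLinearMap (Matrix.toEuclideanLin A)‖

lemma frobSq_nonneg' {m n : Type*} [Fintype m] [Fintype n] (A : Matrix m n ℝ) :
    0 ≤ frobSq A :=
  Finset.sum_nonneg fun _ _ => Finset.sum_nonneg fun _ _ => sq_nonneg _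

lemma frobSq_transpose' {m n : Type*} [Fintype m] [Fintype n] (A : Matrix m n ℝ) :
    frobSq Aᵀ = frobSq A := by
  rw [frobSq, frobSq, Finset.sum_comm]; rfl

lemma dot_abs_le' {m : Type*} [Fintype m] (x y : m → ℝ) :
    |x ⬝ᵥ y| ≤ Real.sqrt (∑ i, x i ^ 2) * Real.sqrt (∑ i, y i ^ 2) := by
  rw [← Real.sqrt_sq_eq_abs, ← Real.sqrt_mul (Finset.sum_nonneg fun _ _ => sq_nonneg _)]
  exact Real.sqrt_le_sqrt (Finset.sum_mul_sq_le_sq_mul_sq _ _ _)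

lemma mulVec_sq_le' {m n : Type*} [Fintype m] [Fintype n]
    (M : Matrix m n ℝ) (x : n → ℝ) :
    ∑ i, (M *ᵥ x) i ^ 2 ≤ frobSq M * ∑ j, x j ^ 2 := by
  rw [frobSq, Finset.sum_mul]
  apply Finset.sum_le_sum; intro i _
  have : (M *ᵥ x) i = ∑ j, M i j * x j := rfl
  rw [this]
  exact Finset.sum_mul_sq_le_sq_mul_sq _ _ _

lemma mulVec_spec_le' {m n : Type*} [Fintype m] [Fintype n] [DecidableEq n]
    (M : Matrix m n ℝ) (x : n → ℝ) :
    Real.sqrt (∑ i, (M *ᵥ x) i ^ 2) ≤ specNorm M * Real.sqrt (∑ j, x j ^ 2) := by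
  have h := (LinearMap.toContinuousLinearMap (Matrix.toEuclideanLin M)).le_opNorm
    ((WithLp.equiv 2 (n → ℝ)).symm x)
  simpa [EuclideanSpace.norm_eq, Matrix.toEuclideanLin_apply, Real.norm_eq_abs, sq_abs,
    specNorm] using h

lemma vecMulVec_mulVec'' {m n : Type*} [Fintype n] (g : m → ℝ) (v y : n → ℝ) :
    vecMulVec g v *ᵥ y = (v ⬝ᵥ y) • g := by
  funext i
  simp [vecMulVec, mulVec, dotProduct, Finset.sum_mul, Finset.mul_sum, mul_comm, mul_assoc,
    mul_left_comm]

lemma half_sq_le' (x y : ℝ) : 2⁻¹ * (x + y) ^ 2 ≤ x ^ 2 + y ^ 2 := by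
  nlinarith [sq_nonneg (x - y)]

/-- If every column of the stacked LoRA weights `Z₁(t) = [B₁(t); A₁(t)ᵀ]`
is `q`-aligned with `γ₁ = (1/√2)[g; v]` at time `t`, then along the dynamics
`Ḃ₁ = (c·gvᵀ + D)A₁ᵀ`, `Ȧ₁ = B₁ᵀ(c·gvᵀ + D)` the signal `gᵀB₁A₁v` grows at rate at least
`(cq² − ‖D(t)‖)(‖A₁‖_F² + ‖B₁‖_F²)`. -/
theorem signal_growth (h n r : ℕ)
    (g : Fin h → ℝ) (v : Fin n → ℝ)
    (hg : ∑ i, g i ^ 2 = 1) (hv : ∑ i, v i ^ 2 = 1)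
    (c q : ℝ) (hc : 0 ≤ c) (hq : 0 ≤ q)
    (D : ℝ → Matrix (Fin h) (Fin n) ℝ)
    (A₁ : ℝ → Matrix (Fin r) (Fin n) ℝ) (B₁ : ℝ → Matrix (Fin h) (Fin r) ℝ)
    (hB₁ : ∀ t i j, HasDerivAt (fun s => B₁ s i j)
      (((c • vecMulVec g v + D t) * (A₁ t)ᵀ) i j) t)
    (hA₁ : ∀ t i j, HasDerivAt (fun s => A₁ s i j)
      (((B₁ t)ᵀ * (c • vecMulVec g v + D t)) i j) t)
    (γ₁ : Fin h ⊕ Fin n → ℝ)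
    (hγ₁ : γ₁ = (Real.sqrt 2)⁻¹ • Sum.elim g v)
    (t : ℝ)
    (halign : ∀ j, q * Real.sqrt (∑ i, Matrix.fromRows (B₁ t) (A₁ t)ᵀ i j ^ 2)
      ≤ ∑ i, γ₁ i * Matrix.fromRows (B₁ t) (A₁ t)ᵀ i j) :
    (c * q ^ 2 - specNorm (D t)) * (frobSq (A₁ t) + frobSq (B₁ t))
      ≤ deriv (fun s => g ⬝ᵥ ((B₁ s * A₁ s) *ᵥ v)) t := by
  set M := c • vecMulVec g v + D t with hM
  set A := A₁ t with hA
  set B := B₁ t with hB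
  set Dt := D t with hDt
  -- derivative computation
  have hder : HasDerivAt (fun s => g ⬝ᵥ ((B₁ s * A₁ s) *ᵥ v))
      (g ⬝ᵥ (((M * Aᵀ) * A + B * (Bᵀ * M)) *ᵥ v)) t := by
    have h1 : ∀ (i : Fin h) (k : Fin n) (j : Fin r),
        HasDerivAt (fun s => g i * (B₁ s i j * A₁ s j k) * v k)
          (g i * ((M * Aᵀ) i j * A j k + B i j * (Bᵀ * M) j k) * v k) t :=
      fun i k j => (((hB₁ t i j).mul (hA₁ t j k)).const_mul (g i)).mul_const (v k)
    have h2 : HasDerivAt (fun s => ∑ i, ∑ k, ∑ j, g i * (B₁ s i j * A₁ s j k) * v k)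
        (∑ i, ∑ k, ∑ j, g i * ((M * Aᵀ) i j * A j k + B i j * (Bᵀ * M) j k) * v k) t := by
      apply HasDerivAt.fun_sum; intro i _
      apply HasDerivAt.fun_sum; intro k _
      apply HasDerivAt.fun_sum; intro j _
      exact h1 i k j
    convert h2 using 1
    · funext s
      simp only [dotProduct, mulVec, Matrix.mul_apply, Finset.sum_mul, Finset.mul_sum]
      exact Finset.sum_congr rfl fun i _ => Finset.sum_congr rfl fun k _ =>
        Finset.sum_congr rfl fun j _ => by ring
    · simp only [dotProduct, mulVec, Matrix.mul_apply, Matrix.add_apply, Finset.sum_mul,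
        Finset.mul_sum, Finset.sum_add_distrib, mul_add, add_mul]
      congr 1 <;>
      exact Finset.sum_congr rfl fun i _ => Finset.sum_congr rfl fun k _ =>
        Finset.sum_congr rfl fun j _ => Finset.sum_congr rfl fun l _ => by ring
  rw [hder.deriv]
  set u := A *ᵥ v with hu
  set w := Bᵀ *ᵥ g with hw
  have hgd : g ⬝ᵥ g = 1 := by rw [← hg]; exact Finset.sum_congr rfl fun i _ => (sq (g i)).symm
  have hvd : v ⬝ᵥ v = 1 := by rw [← hv]; exact Finset.sum_congr rfl fun i _ => (sq (v i)).symm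
  -- algebraic identity for the derivative value
  have hval : g ⬝ᵥ (((M * Aᵀ) * A + B * (Bᵀ * M)) *ᵥ v)
      = c * (u ⬝ᵥ u) + c * (w ⬝ᵥ w)
        + g ⬝ᵥ (Dt *ᵥ (Aᵀ *ᵥ u)) + w ⬝ᵥ (Bᵀ *ᵥ (Dt *ᵥ v)) := by
    rw [Matrix.add_mulVec, dotProduct_add]
    have e1 : g ⬝ᵥ ((M * Aᵀ * A) *ᵥ v)
        = c * (u ⬝ᵥ u) + g ⬝ᵥ (Dt *ᵥ (Aᵀ *ᵥ u)) := by
      rw [← mulVec_mulVec, ← mulVec_mulVec, ← hu, hM, Matrix.add_mulVec,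
        Matrix.smul_mulVec, vecMulVec_mulVec'', dotProduct_add, dotProduct_smul,
        dotProduct_smul]
      have hvu : v ⬝ᵥ (Aᵀ *ᵥ u) = u ⬝ᵥ u := by
        rw [dotProduct_mulVec, vecMul_transpose, ← hu, dotProduct_comm]
      rw [hvu, hgd, smul_eq_mul, smul_eq_mul, mul_one]
    have e2 : g ⬝ᵥ ((B * (Bᵀ * M)) *ᵥ v)
        = c * (w ⬝ᵥ w) + w ⬝ᵥ (Bᵀ *ᵥ (Dt *ᵥ v)) := by
      rw [← mulVec_mulVec, ← mulVec_mulVec, hM, Matrix.add_mulVec, Matrix.smul_mulVec,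
        vecMulVec_mulVec'', hvd, one_smul, Matrix.mulVec_add, Matrix.mulVec_smul, ← hw,
        dotProduct_mulVec g B, ← mulVec_transpose, ← hw, dotProduct_add, dotProduct_smul,
        smul_eq_mul]
    rw [e1, e2]; ring
  rw [hval]
  set SA := frobSq A with hSA
  set SB := frobSq B with hSB
  set d := specNorm Dt with hd
  have hSA0 : 0 ≤ SA := frobSq_nonneg' A
  have hSB0 : 0 ≤ SB := frobSq_nonneg' B
  have hd0 : 0 ≤ d := norm_nonneg _
  have hu2 : ∑ i, u i ^ 2 ≤ SA := by
    have := mulVec_sq_le' A v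
    rwa [hv, mul_one] at this
  have hw2 : ∑ i, w i ^ 2 ≤ SB := by
    have := mulVec_sq_le' Bᵀ g
    rwa [hg, mul_one, frobSq_transpose'] at this
  clear hval hder hM
  clear_value A B Dt u w SA SB d
  clear M
  -- alignment implies q² (SB + SA) ≤ w⬝w + u⬝u
  have halign' : q ^ 2 * (SA + SB) ≤ u ⬝ᵥ u + w ⬝ᵥ w := by
    have key : ∀ j : Fin r, q ^ 2 * ((∑ b, A j b ^ 2) + ∑ a, B a j ^ 2)
        ≤ u j ^ 2 + w j ^ 2 := by
      intro j
      have hj := halign j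
      have hsum : (∑ i, Matrix.fromRows B Aᵀ i j ^ 2)
          = (∑ b, A j b ^ 2) + ∑ a, B a j ^ 2 := by
        rw [Fintype.sum_sum_type]
        simp [Matrix.fromRows_apply_inl, Matrix.fromRows_apply_inr, add_comm]
      have hrhs : (∑ i, γ₁ i * Matrix.fromRows B Aᵀ i j)
          = (Real.sqrt 2)⁻¹ * (w j + u j) := by
        rw [hγ₁, Fintype.sum_sum_type]
        simp only [Matrix.fromRows_apply_inl, Matrix.fromRows_apply_inr, Pi.smul_apply, Sum.elim_inl, Sum.elim_inr,
          Matrix.of_apply, smul_eq_mul, Matrix.transpose_apply]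
        have hwj : w j = ∑ a, g a * B a j := by
          simp [hw, mulVec, dotProduct, Matrix.transpose_apply, mul_comm]
        have huj : u j = ∑ b, v b * A j b := by
          simp [hu, mulVec, dotProduct, mul_comm]
        rw [hwj, huj, mul_add, Finset.mul_sum, Finset.mul_sum]
        congr 1 <;> exact Finset.sum_congr rfl fun i _ => by ring
      rw [hsum, hrhs] at hj
      set S := (∑ b, A j b ^ 2) + ∑ a, B a j ^ 2 with hS
      have hS0 : 0 ≤ S :=
        add_nonneg (Finset.sum_nonneg fun _ _ => sq_nonneg _)
          (Finset.sum_nonneg fun _ _ => sq_nonneg _)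
      have h0 : 0 ≤ q * Real.sqrt S := mul_nonneg hq (Real.sqrt_nonneg _)
      have hsq := mul_self_le_mul_self h0 hj
      have hl : (q * Real.sqrt S) * (q * Real.sqrt S) = q ^ 2 * S := by
        rw [mul_mul_mul_comm, Real.mul_self_sqrt hS0, sq]
      have hr : ((Real.sqrt 2)⁻¹ * (w j + u j)) * ((Real.sqrt 2)⁻¹ * (w j + u j))
          = 2⁻¹ * (w j + u j) ^ 2 := by
        rw [mul_mul_mul_comm, ← mul_inv, Real.mul_self_sqrt (by norm_num : (0:ℝ) ≤ 2), sq]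
      rw [hl, hr] at hsq
      exact hsq.trans ((half_sq_le' (w j) (u j)).trans_eq (add_comm _ _))
    have hsumkey := Finset.sum_le_sum (fun j (_ : j ∈ Finset.univ) => key j)
    have hL : (∑ j : Fin r, q ^ 2 * ((∑ b, A j b ^ 2) + ∑ a, B a j ^ 2))
        = q ^ 2 * (SA + SB) := by
      have hss : (∑ j : Fin r, ((∑ b, A j b ^ 2) + ∑ a, B a j ^ 2)) = SA + SB := by
        rw [Finset.sum_add_distrib, hSA, hSB, frobSq, frobSq]
        congr 1
        exact Finset.sum_comm
      rw [← Finset.mul_sum, hss]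
    have hR : (∑ j : Fin r, (u j ^ 2 + w j ^ 2)) = u ⬝ᵥ u + w ⬝ᵥ w := by
      rw [Finset.sum_add_distrib]
      congr 1 <;> exact Finset.sum_congr rfl fun i _ => sq (_ : ℝ)
    rw [hL, hR] at hsumkey
    exact hsumkey
  -- error term bounds
  have hE1 : |g ⬝ᵥ (Dt *ᵥ (Aᵀ *ᵥ u))| ≤ d * SA := by
    have h1 := dot_abs_le' g (Dt *ᵥ (Aᵀ *ᵥ u))
    rw [hg, Real.sqrt_one, one_mul] at h1
    have h2 := mulVec_spec_le' Dt (Aᵀ *ᵥ u)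
    rw [← hd] at h2
    have h3 : Real.sqrt (∑ j, (Aᵀ *ᵥ u) j ^ 2) ≤ SA := by
      have h4 : ∑ j, (Aᵀ *ᵥ u) j ^ 2 ≤ SA * SA := by
        calc ∑ j, (Aᵀ *ᵥ u) j ^ 2 ≤ frobSq Aᵀ * ∑ i, u i ^ 2 := mulVec_sq_le' Aᵀ u
          _ = SA * ∑ i, u i ^ 2 := by rw [frobSq_transpose', ← hSA]
          _ ≤ SA * SA := mul_le_mul_of_nonneg_left hu2 hSA0
      calc Real.sqrt (∑ j, (Aᵀ *ᵥ u) j ^ 2) ≤ Real.sqrt (SA * SA) := Real.sqrt_le_sqrt h4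
        _ = SA := Real.sqrt_mul_self hSA0
    calc |g ⬝ᵥ (Dt *ᵥ (Aᵀ *ᵥ u))| ≤ Real.sqrt (∑ i, (Dt *ᵥ (Aᵀ *ᵥ u)) i ^ 2) := h1
      _ ≤ d * Real.sqrt (∑ j, (Aᵀ *ᵥ u) j ^ 2) := h2
      _ ≤ d * SA := mul_le_mul_of_nonneg_left h3 hd0
  have hE2 : |w ⬝ᵥ (Bᵀ *ᵥ (Dt *ᵥ v))| ≤ d * SB := by
    have h1 := dot_abs_le' w (Bᵀ *ᵥ (Dt *ᵥ v))
    have h2 : Real.sqrt (∑ i, w i ^ 2) ≤ Real.sqrt SB := Real.sqrt_le_sqrt hw2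
    have h3 : Real.sqrt (∑ j, (Bᵀ *ᵥ (Dt *ᵥ v)) j ^ 2) ≤ Real.sqrt SB * d := by
      have h4 : ∑ j, (Bᵀ *ᵥ (Dt *ᵥ v)) j ^ 2 ≤ SB * ∑ i, (Dt *ᵥ v) i ^ 2 := by
        have := mulVec_sq_le' Bᵀ (Dt *ᵥ v)
        rwa [frobSq_transpose', ← hSB] at this
      have h5 : Real.sqrt (∑ i, (Dt *ᵥ v) i ^ 2) ≤ d := by
        have := mulVec_spec_le' Dt v
        rwa [hv, Real.sqrt_one, mul_one, ← hd] at this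
      calc Real.sqrt (∑ j, (Bᵀ *ᵥ (Dt *ᵥ v)) j ^ 2)
          ≤ Real.sqrt (SB * ∑ i, (Dt *ᵥ v) i ^ 2) := Real.sqrt_le_sqrt h4
        _ = Real.sqrt SB * Real.sqrt (∑ i, (Dt *ᵥ v) i ^ 2) := Real.sqrt_mul hSB0 _
        _ ≤ Real.sqrt SB * d := mul_le_mul_of_nonneg_left h5 (Real.sqrt_nonneg _)
    calc |w ⬝ᵥ (Bᵀ *ᵥ (Dt *ᵥ v))|
        ≤ Real.sqrt (∑ i, w i ^ 2) * Real.sqrt (∑ j, (Bᵀ *ᵥ (Dt *ᵥ v)) j ^ 2) := h1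
      _ ≤ Real.sqrt SB * (Real.sqrt SB * d) := by
          apply mul_le_mul h2 h3 (Real.sqrt_nonneg _) (Real.sqrt_nonneg _)
      _ = d * SB := by rw [← mul_assoc, Real.mul_self_sqrt hSB0, mul_comm]
  -- assemble
  have hc1 : c * q ^ 2 * (SA + SB) ≤ c * (u ⬝ᵥ u) + c * (w ⬝ᵥ w) := by
    have := mul_le_mul_of_nonneg_left halign' hc
    calc c * q ^ 2 * (SA + SB) = c * (q ^ 2 * (SA + SB)) := by ring
      _ ≤ c * (u ⬝ᵥ u + w ⬝ᵥ w) := this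
      _ = c * (u ⬝ᵥ u) + c * (w ⬝ᵥ w) := by ring
  have e1 := neg_abs_le (g ⬝ᵥ (Dt *ᵥ (Aᵀ *ᵥ u)))
  have e2 := neg_abs_le (w ⬝ᵥ (Bᵀ *ᵥ (Dt *ᵥ v)))
  have hexp : (c * q ^ 2 - d) * (SA + SB)
      = c * q ^ 2 * (SA + SB) - d * SA - d * SB := by ring
  rw [hexp]
  linarith [hE1, hE2, hc1, e1, e2]
end

section
/- Let g ∈ ℝ^h and v ∈ ℝ^n be unit vectors, B ∈ ℝ^{h×r}, A ∈ ℝ^{r×n}, and set γ₁ = (1/√2)·[g; v] and Z = [B; Aᵀ] ∈ ℝ^{(h+n)×r} with columns w₁,…,w_r. Let ε ∈ [0,1] and suppose ⟨γ₁, w_j⟩² ≥ (1−ε)·‖w_j‖² for every j. Then ‖(I − ggᵀ)·B·A‖ ≤ √ε·(‖A‖_F² + ‖B‖_F²) and ‖B·A·(I − vvᵀ)‖ ≤ √ε·(‖A‖_F² + ‖B‖_F²), where ‖·‖ denotes the spectral norm. -/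
open Matrix

lemma specNorm_sum_le {m n ι : Type*} [Fintype m] [Fintype n] [Fintype ι] [DecidableEq n]
    (M : ι → Matrix m n ℝ) : specNorm (∑ j, M j) ≤ ∑ j, specNorm (M j) := by
  unfold specNorm
  rw [map_sum, map_sum]
  exact norm_sum_le _ _

lemma specNorm_vecMulVec_le {m n : Type*} [Fintype m] [Fintype n] [DecidableEq n]
    (x : m → ℝ) (y : n → ℝ) :
    specNorm (vecMulVec x y) ≤ Real.sqrt (∑ i, x i ^ 2) * Real.sqrt (∑ j, y j ^ 2) := by
  unfold specNorm
  apply ContinuousLinearMap.opNorm_le_bound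
  · positivity
  intro u
  have hnu : ‖u‖ = Real.sqrt (∑ j, (u j) ^ 2) := by
    rw [EuclideanSpace.norm_eq]
    congr 1
    exact Finset.sum_congr rfl fun j _ => by rw [Real.norm_eq_abs, sq_abs]
  set c : ℝ := ∑ j, y j * u j with hc
  have happly : (LinearMap.toContinuousLinearMap (Matrix.toEuclideanLin (vecMulVec x y))) u
      = (WithLp.equiv 2 (m → ℝ)).symm (fun i => x i * c) := by
    simp only [LinearMap.coe_toContinuousLinearMap', toEuclideanLin_apply]
    congr 1
    funext i
    simp only [mulVec, dotProduct, vecMulVec_apply, hc, Finset.mul_sum]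
    exact Finset.sum_congr rfl fun j _ => by ring
  rw [happly]
  have hn2 : ‖(WithLp.equiv 2 (m → ℝ)).symm (fun i => x i * c)‖
      = Real.sqrt (∑ i, (x i * c) ^ 2) := by
    rw [EuclideanSpace.norm_eq]
    congr 1
    exact Finset.sum_congr rfl fun i _ => by rw [Real.norm_eq_abs, sq_abs]; rfl
  rw [hn2]
  have h1 : ∑ i, (x i * c) ^ 2 = (∑ i, x i ^ 2) * c ^ 2 := by
    rw [Finset.sum_mul]; exact Finset.sum_congr rfl fun i _ => by ring
  rw [h1, Real.sqrt_mul (by positivity)]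
  have hcs : c ^ 2 ≤ (∑ j, y j ^ 2) * ∑ j, (u j) ^ 2 :=
    Finset.sum_mul_sq_le_sq_mul_sq _ _ _
  have hkey : Real.sqrt (c ^ 2) ≤ Real.sqrt (∑ j, y j ^ 2) * Real.sqrt (∑ j, (u j) ^ 2) := by
    rw [← Real.sqrt_mul (by positivity)]
    exact Real.sqrt_le_sqrt hcs
  rw [hnu]
  calc Real.sqrt (∑ i, x i ^ 2) * Real.sqrt (c ^ 2)
      ≤ Real.sqrt (∑ i, x i ^ 2) * (Real.sqrt (∑ j, y j ^ 2) * Real.sqrt (∑ j, (u j) ^ 2)) :=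
        mul_le_mul_of_nonneg_left hkey (Real.sqrt_nonneg _)
    _ = Real.sqrt (∑ i, x i ^ 2) * Real.sqrt (∑ j, y j ^ 2) * Real.sqrt (∑ j, (u j) ^ 2) := by
        ring

lemma key_scalar (ε s t β α : ℝ) (hε0 : 0 ≤ ε) (hs : 0 ≤ s) (ht : 0 ≤ t)
    (hβ : β ^ 2 ≤ s) (hα : α ^ 2 ≤ t) (hmain : (1 - ε) * (s + t) ≤ β ^ 2 + α ^ 2) :
    Real.sqrt (s - β ^ 2) * Real.sqrt t ≤ Real.sqrt ε * (s + t) := by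
  have h1 : s - β ^ 2 ≤ ε * (s + t) := by nlinarith
  have h2 : Real.sqrt (s - β ^ 2) ≤ Real.sqrt ε * Real.sqrt (s + t) := by
    rw [← Real.sqrt_mul hε0]
    exact Real.sqrt_le_sqrt h1
  have h3 : Real.sqrt t ≤ Real.sqrt (s + t) := Real.sqrt_le_sqrt (by linarith)
  calc Real.sqrt (s - β ^ 2) * Real.sqrt t
      ≤ (Real.sqrt ε * Real.sqrt (s + t)) * Real.sqrt (s + t) :=
        mul_le_mul h2 h3 (Real.sqrt_nonneg _) (by positivity)
    _ = Real.sqrt ε * (Real.sqrt (s + t) * Real.sqrt (s + t)) := by ring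
    _ = Real.sqrt ε * (s + t) := by rw [Real.mul_self_sqrt (by linarith)]

lemma offsignal_left {h n r : ℕ} (g : Fin h → ℝ)
    (B : Matrix (Fin h) (Fin r) ℝ) (A : Matrix (Fin r) (Fin n) ℝ)
    (ε : ℝ) (hε0 : 0 ≤ ε) (hg : ∑ i, g i ^ 2 = 1)
    (α : Fin r → ℝ)
    (hα : ∀ j, α j ^ 2 ≤ ∑ k, A j k ^ 2)
    (hmain : ∀ j, (1 - ε) * ((∑ i, B i j ^ 2) + ∑ k, A j k ^ 2)
        ≤ (∑ i, g i * B i j) ^ 2 + α j ^ 2) :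
    specNorm ((1 - vecMulVec g g) * (B * A))
      ≤ Real.sqrt ε * ∑ j, ((∑ i, B i j ^ 2) + ∑ k, A j k ^ 2) := by
  have hd : (1 - vecMulVec g g) * (B * A)
      = ∑ j, vecMulVec (fun i => B i j - (∑ l, g l * B l j) * g i) (fun k => A j k) := by
    rw [Matrix.sub_mul, Matrix.one_mul]
    ext i k
    simp only [Matrix.sub_apply, Matrix.sum_apply, vecMulVec_apply, Matrix.mul_apply]
    have e1 : ∑ l, (g i * g l) * (∑ j, B l j * A j k)
        = ∑ j, ((∑ l, g l * B l j) * g i) * A j k := by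
      simp only [Finset.mul_sum]
      rw [Finset.sum_comm]
      refine Finset.sum_congr rfl fun j _ => ?_
      rw [Finset.sum_mul, Finset.sum_mul]
      exact Finset.sum_congr rfl fun l _ => by ring
    rw [e1, ← Finset.sum_sub_distrib]
    exact Finset.sum_congr rfl fun j _ => by ring
  rw [hd]
  calc specNorm (∑ j, vecMulVec (fun i => B i j - (∑ l, g l * B l j) * g i) (fun k => A j k))
      ≤ ∑ j, specNorm (vecMulVec (fun i => B i j - (∑ l, g l * B l j) * g i) (fun k => A j k)) :=
        specNorm_sum_le _
    _ ≤ ∑ j, Real.sqrt ε * ((∑ i, B i j ^ 2) + ∑ k, A j k ^ 2) := by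
        refine Finset.sum_le_sum fun j _ => ?_
        refine le_trans (specNorm_vecMulVec_le _ _) ?_
        have hperp : ∑ i, (B i j - (∑ l, g l * B l j) * g i) ^ 2
            = (∑ i, B i j ^ 2) - (∑ l, g l * B l j) ^ 2 := by
          have e : ∀ i, (B i j - (∑ l, g l * B l j) * g i) ^ 2
              = B i j ^ 2 - 2 * (∑ l, g l * B l j) * (g i * B i j)
                + (∑ l, g l * B l j) ^ 2 * g i ^ 2 := fun i => by ring
          simp only [e]
          rw [Finset.sum_add_distrib, Finset.sum_sub_distrib, ← Finset.mul_sum,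
            ← Finset.mul_sum, hg]
          ring
        rw [hperp]
        have hβ : (∑ l, g l * B l j) ^ 2 ≤ ∑ i, B i j ^ 2 := by
          have := Finset.sum_mul_sq_le_sq_mul_sq Finset.univ g (fun i => B i j)
          rwa [hg, one_mul] at this
        exact key_scalar ε _ _ _ _ hε0 (by positivity) (by positivity) hβ (hα j) (hmain j)
    _ = Real.sqrt ε * ∑ j, ((∑ i, B i j ^ 2) + ∑ k, A j k ^ 2) := by rw [Finset.mul_sum]

lemma offsignal_right {h n r : ℕ} (v : Fin n → ℝ)
    (B : Matrix (Fin h) (Fin r) ℝ) (A : Matrix (Fin r) (Fin n) ℝ)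
    (ε : ℝ) (hε0 : 0 ≤ ε) (hv : ∑ k, v k ^ 2 = 1)
    (β : Fin r → ℝ)
    (hβ : ∀ j, β j ^ 2 ≤ ∑ i, B i j ^ 2)
    (hmain : ∀ j, (1 - ε) * ((∑ i, B i j ^ 2) + ∑ k, A j k ^ 2)
        ≤ β j ^ 2 + (∑ k, v k * A j k) ^ 2) :
    specNorm ((B * A) * (1 - vecMulVec v v))
      ≤ Real.sqrt ε * ∑ j, ((∑ i, B i j ^ 2) + ∑ k, A j k ^ 2) := by
  have hd : (B * A) * (1 - vecMulVec v v)
      = ∑ j, vecMulVec (fun i => B i j) (fun k => A j k - (∑ l, v l * A j l) * v k) := by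
    rw [Matrix.mul_sub, Matrix.mul_one]
    ext i k
    simp only [Matrix.sub_apply, Matrix.sum_apply, vecMulVec_apply, Matrix.mul_apply]
    have e1 : ∑ l, (∑ j, B i j * A j l) * (v l * v k)
        = ∑ j, B i j * ((∑ l, v l * A j l) * v k) := by
      simp only [Finset.sum_mul]
      rw [Finset.sum_comm]
      refine Finset.sum_congr rfl fun j _ => ?_
      rw [Finset.mul_sum]
      exact Finset.sum_congr rfl fun l _ => by ring
    rw [e1, ← Finset.sum_sub_distrib]
    exact Finset.sum_congr rfl fun j _ => by ring
  rw [hd]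
  calc specNorm (∑ j, vecMulVec (fun i => B i j) (fun k => A j k - (∑ l, v l * A j l) * v k))
      ≤ ∑ j, specNorm (vecMulVec (fun i => B i j) (fun k => A j k - (∑ l, v l * A j l) * v k)) :=
        specNorm_sum_le _
    _ ≤ ∑ j, Real.sqrt ε * ((∑ i, B i j ^ 2) + ∑ k, A j k ^ 2) := by
        refine Finset.sum_le_sum fun j _ => ?_
        refine le_trans (specNorm_vecMulVec_le _ _) ?_
        have hperp : ∑ k, (A j k - (∑ l, v l * A j l) * v k) ^ 2
            = (∑ k, A j k ^ 2) - (∑ l, v l * A j l) ^ 2 := by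
          have e : ∀ k, (A j k - (∑ l, v l * A j l) * v k) ^ 2
              = A j k ^ 2 - 2 * (∑ l, v l * A j l) * (v k * A j k)
                + (∑ l, v l * A j l) ^ 2 * v k ^ 2 := fun k => by ring
          simp only [e]
          rw [Finset.sum_add_distrib, Finset.sum_sub_distrib, ← Finset.mul_sum,
            ← Finset.mul_sum, hv]
          ring
        rw [hperp]
        have hα : (∑ l, v l * A j l) ^ 2 ≤ ∑ k, A j k ^ 2 := by
          have := Finset.sum_mul_sq_le_sq_mul_sq Finset.univ v (fun k => A j k)
          rwa [hv, one_mul] at this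
        have hk := key_scalar ε (∑ k, A j k ^ 2) (∑ i, B i j ^ 2) (∑ l, v l * A j l) (β j)
          hε0 (by positivity) (by positivity) hα (hβ j)
          (by rw [add_comm (∑ k, A j k ^ 2)]; rw [add_comm ((∑ l, v l * A j l) ^ 2)]
              exact hmain j)
        calc Real.sqrt (∑ i, B i j ^ 2)
              * Real.sqrt ((∑ k, A j k ^ 2) - (∑ l, v l * A j l) ^ 2)
            = Real.sqrt ((∑ k, A j k ^ 2) - (∑ l, v l * A j l) ^ 2)
              * Real.sqrt (∑ i, B i j ^ 2) := by ring
          _ ≤ Real.sqrt ε * ((∑ k, A j k ^ 2) + ∑ i, B i j ^ 2) := hk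
          _ = Real.sqrt ε * ((∑ i, B i j ^ 2) + ∑ k, A j k ^ 2) := by ring
    _ = Real.sqrt ε * ∑ j, ((∑ i, B i j ^ 2) + ∑ k, A j k ^ 2) := by rw [Finset.mul_sum]

/-- If every column `w_j` of `Z = [B; Aᵀ]` satisfies
`⟨γ₁, w_j⟩² ≥ (1−ε)‖w_j‖²` with `γ₁ = (1/√2)[g; v]`, then
`‖(I − ggᵀ)BA‖ ≤ √ε (‖A‖_F² + ‖B‖_F²)` and `‖BA(I − vvᵀ)‖ ≤ √ε (‖A‖_F² + ‖B‖_F²)`. -/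
theorem alignment_to_offsignal_bound (h n r : ℕ)
    (g : Fin h → ℝ) (v : Fin n → ℝ)
    (hg : ∑ i, g i ^ 2 = 1) (hv : ∑ i, v i ^ 2 = 1)
    (B : Matrix (Fin h) (Fin r) ℝ) (A : Matrix (Fin r) (Fin n) ℝ)
    (γ₁ : Fin h ⊕ Fin n → ℝ)
    (hγ₁ : γ₁ = (Real.sqrt 2)⁻¹ • Sum.elim g v)
    (ε : ℝ) (hε0 : 0 ≤ ε) (hε1 : ε ≤ 1)
    (halign : ∀ j, (1 - ε) * (∑ i, Matrix.fromRows B Aᵀ i j ^ 2)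
      ≤ (∑ i, γ₁ i * Matrix.fromRows B Aᵀ i j) ^ 2) :
    specNorm ((1 - vecMulVec g g) * (B * A)) ≤ Real.sqrt ε * (frobSq A + frobSq B) ∧
    specNorm ((B * A) * (1 - vecMulVec v v)) ≤ Real.sqrt ε * (frobSq A + frobSq B) := by
  have hmain : ∀ j, (1 - ε) * ((∑ i, B i j ^ 2) + ∑ k, A j k ^ 2)
      ≤ (∑ i, g i * B i j) ^ 2 + (∑ k, v k * A j k) ^ 2 := by
    intro j
    have h0 := halign j
    have hsumZ : (∑ i, Matrix.fromRows B Aᵀ i j ^ 2)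
        = (∑ i, B i j ^ 2) + ∑ k, A j k ^ 2 := by
      rw [Fintype.sum_sum_type]
      simp [Matrix.fromRows_apply_inl, Matrix.fromRows_apply_inr]
    have hdot : (∑ i, γ₁ i * Matrix.fromRows B Aᵀ i j)
        = (Real.sqrt 2)⁻¹ * ((∑ i, g i * B i j) + ∑ k, v k * A j k) := by
      subst hγ₁
      rw [Fintype.sum_sum_type]
      simp only [Matrix.fromRows, Matrix.of_apply, Sum.elim_inl, Sum.elim_inr,
        Pi.smul_apply, smul_eq_mul, Matrix.transpose_apply]
      rw [mul_add, Finset.mul_sum, Finset.mul_sum]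
      congr 1
      · exact Finset.sum_congr rfl fun i _ => by
          have e : (B ⊕ᵥ Aᵀ) (Sum.inl i) j = B i j := rfl
          rw [e]; ring
      · exact Finset.sum_congr rfl fun k _ => by
          have e : (B ⊕ᵥ Aᵀ) (Sum.inr k) j = A j k := rfl
          rw [e]; ring
    rw [hsumZ, hdot] at h0
    have hsq : ((Real.sqrt 2)⁻¹ * ((∑ i, g i * B i j) + ∑ k, v k * A j k)) ^ 2
        = ((∑ i, g i * B i j) + ∑ k, v k * A j k) ^ 2 / 2 := by
      rw [mul_pow, inv_pow, Real.sq_sqrt (by norm_num : (0:ℝ) ≤ 2)]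
      ring
    rw [hsq] at h0
    nlinarith [sq_nonneg ((∑ i, g i * B i j) - ∑ k, v k * A j k)]
  have hαle : ∀ j, (∑ k, v k * A j k) ^ 2 ≤ ∑ k, A j k ^ 2 := fun j => by
    have := Finset.sum_mul_sq_le_sq_mul_sq Finset.univ v (fun k => A j k)
    rwa [hv, one_mul] at this
  have hβle : ∀ j, (∑ i, g i * B i j) ^ 2 ≤ ∑ i, B i j ^ 2 := fun j => by
    have := Finset.sum_mul_sq_le_sq_mul_sq Finset.univ g (fun i => B i j)
    rwa [hg, one_mul] at this
  have hfrob : ∑ j, ((∑ i, B i j ^ 2) + ∑ k, A j k ^ 2) = frobSq A + frobSq B := by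
    have h1 : frobSq B = ∑ j, ∑ i, B i j ^ 2 := by unfold frobSq; rw [Finset.sum_comm]
    have h2 : frobSq A = ∑ j, ∑ k, A j k ^ 2 := rfl
    rw [Finset.sum_add_distrib, h1, h2]
    exact add_comm _ _
  constructor
  · have := offsignal_left g B A ε hε0 hg (fun j => ∑ k, v k * A j k) hαle hmain
    rwa [hfrob] at this
  · have := offsignal_right v B A ε hε0 hv (fun j => ∑ i, g i * B i j) hβle hmain
    rwa [hfrob] at this
end

section
/- Let g ∈ ℝ^h and v ∈ ℝ^n be unit vectors, B ∈ ℝ^{h×r}, A ∈ ℝ^{r×n}, Λ = A·Aᵀ − Bᵀ·B, γ₁ = (1/√2)·[g; v], and let Z = [B; Aᵀ] have columns w₁,…,w_r. Let ε ∈ [0,1] and suppose ⟨γ₁, w_j⟩² ≥ (1−ε)·‖w_j‖² for every j. Then (gᵀBBᵀg)² ≤ (gᵀBAv)² + ‖Λ‖·(gᵀBBᵀg) + 2ε·(‖A‖_F² + ‖B‖_F²)², where ‖Λ‖ is the spectral norm of Λ. -/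
open Matrix

lemma specNorm_quad {r : ℕ} (M : Matrix (Fin r) (Fin r) ℝ) (x : Fin r → ℝ) :
    |x ⬝ᵥ (M *ᵥ x)| ≤ specNorm M * ∑ i, x i ^ 2 := by
  set y : EuclideanSpace ℝ (Fin r) := (WithLp.equiv 2 _).symm x with hy
  have hyx : ∀ i, y i = x i := fun i => rfl
  have h1 : x ⬝ᵥ (M *ᵥ x) = inner ℝ y ((Matrix.toEuclideanLin M) y) := by
    show x ⬝ᵥ (M *ᵥ x) = inner ℝ (WithLp.toLp 2 x) (WithLp.toLp 2 (M *ᵥ x))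
    simp [PiLp.inner_apply, RCLike.inner_apply, dotProduct, mul_comm]
  have hny : ‖y‖ ^ 2 = ∑ i, x i ^ 2 := by
    rw [EuclideanSpace.norm_eq]
    rw [Real.sq_sqrt (by positivity)]
    simp [hyx, sq_abs]
  have h2 : |inner ℝ y ((Matrix.toEuclideanLin M) y)| ≤ ‖y‖ * ‖(Matrix.toEuclideanLin M) y‖ :=
    abs_real_inner_le_norm _ _
  have h3 : ‖(Matrix.toEuclideanLin M) y‖ ≤ specNorm M * ‖y‖ := by
    have h4 := (LinearMap.toContinuousLinearMap (Matrix.toEuclideanLin M)).le_opNorm y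
    rwa [LinearMap.coe_toContinuousLinearMap'] at h4
  have hy0 : (0:ℝ) ≤ ‖y‖ := norm_nonneg _
  calc |x ⬝ᵥ (M *ᵥ x)| = |inner ℝ y ((Matrix.toEuclideanLin M) y)| := by rw [h1]
    _ ≤ ‖y‖ * (specNorm M * ‖y‖) := le_trans h2 (by nlinarith)
    _ = specNorm M * ∑ i, x i ^ 2 := by rw [← hny]; ring

/-- If every column `w_j` of `Z = [B; Aᵀ]` satisfies
`⟨γ₁, w_j⟩² ≥ (1−ε)‖w_j‖²`, then with `Λ = AAᵀ − BᵀB`,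
`(gᵀBBᵀg)² ≤ (gᵀBAv)² + ‖Λ‖(gᵀBBᵀg) + 2ε(‖A‖_F² + ‖B‖_F²)²`. -/
theorem diagonal_form_bound (h n r : ℕ)
    (g : Fin h → ℝ) (v : Fin n → ℝ)
    (hg : ∑ i, g i ^ 2 = 1) (hv : ∑ i, v i ^ 2 = 1)
    (B : Matrix (Fin h) (Fin r) ℝ) (A : Matrix (Fin r) (Fin n) ℝ)
    (Λ : Matrix (Fin r) (Fin r) ℝ) (hΛ : Λ = A * Aᵀ - Bᵀ * B)
    (γ₁ : Fin h ⊕ Fin n → ℝ)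
    (hγ₁ : γ₁ = (Real.sqrt 2)⁻¹ • Sum.elim g v)
    (ε : ℝ) (hε0 : 0 ≤ ε) (hε1 : ε ≤ 1)
    (halign : ∀ j, (1 - ε) * (∑ i, Matrix.fromRows B Aᵀ i j ^ 2)
      ≤ (∑ i, γ₁ i * Matrix.fromRows B Aᵀ i j) ^ 2) :
    (g ⬝ᵥ ((B * Bᵀ) *ᵥ g)) ^ 2
      ≤ (g ⬝ᵥ ((B * A) *ᵥ v)) ^ 2 + specNorm Λ * (g ⬝ᵥ ((B * Bᵀ) *ᵥ g))
        + 2 * ε * (frobSq A + frobSq B) ^ 2 := by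
  classical
  -- basic vectors
  set a : Fin r → ℝ := fun j => ∑ i, g i * B i j with ha
  set b : Fin r → ℝ := fun j => ∑ k, A j k * v k with hb
  set u : Fin n → ℝ := fun k => ∑ j, a j * A j k with hu
  set S : ℝ := ∑ j, a j ^ 2 with hS
  set T : ℝ := ∑ j, a j * b j with hT
  set F : ℝ := frobSq A + frobSq B with hF
  -- identifications of the dot products
  have hSid : g ⬝ᵥ ((B * Bᵀ) *ᵥ g) = S := by
    rw [← Matrix.mulVec_mulVec, Matrix.dotProduct_mulVec]
    simp only [hS, Matrix.vecMul, Matrix.mulVec, dotProduct, Matrix.transpose_apply]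
    exact Finset.sum_congr rfl fun j _ => by rw [sq]; congr 1; exact Finset.sum_congr rfl fun i _ => mul_comm _ _
  have hTid : g ⬝ᵥ ((B * A) *ᵥ v) = T := by
    rw [← Matrix.mulVec_mulVec, Matrix.dotProduct_mulVec]
    simp only [hT, Matrix.vecMul, Matrix.mulVec, dotProduct]
    rfl
  rw [hSid, hTid]
  -- nonnegativity facts
  have hS0 : 0 ≤ S := Finset.sum_nonneg fun j _ => sq_nonneg _
  have hFA0 : 0 ≤ frobSq A := Finset.sum_nonneg fun i _ => Finset.sum_nonneg fun j _ => sq_nonneg _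
  have hFB0 : 0 ≤ frobSq B := Finset.sum_nonneg fun i _ => Finset.sum_nonneg fun j _ => sq_nonneg _
  have hF0 : 0 ≤ F := by rw [hF]; linarith
  -- Cauchy-Schwarz per column: a j ^ 2 ≤ ∑ i, B i j ^ 2
  have hacol : ∀ j, a j ^ 2 ≤ ∑ i, B i j ^ 2 := by
    intro j
    have := Finset.sum_mul_sq_le_sq_mul_sq Finset.univ g (fun i => B i j)
    rw [hg] at this
    simpa [ha] using this
  have hbrow : ∀ j, b j ^ 2 ≤ ∑ k, A j k ^ 2 := by
    intro j
    have := Finset.sum_mul_sq_le_sq_mul_sq Finset.univ (fun k => A j k) v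
    rw [hv] at this
    simpa [hb] using this
  -- step: S ≤ frobSq B
  have hSF : S ≤ frobSq B := by
    have h1 : S ≤ ∑ j, ∑ i, B i j ^ 2 := Finset.sum_le_sum fun j _ => hacol j
    have h2 : (∑ j, ∑ i, B i j ^ 2) = frobSq B := Finset.sum_comm
    linarith
  -- step 1 : S^2 ≤ ∑ i, ((B *ᵥ a) i)^2 (Cauchy-Schwarz)
  have hBa : ∀ i, (B *ᵥ a) i = ∑ j, B i j * a j := fun i => rfl
  have step1 : S ^ 2 ≤ ∑ i, ((B *ᵥ a) i) ^ 2 := by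
    have hgb : S = ∑ i, g i * (B *ᵥ a) i := by
      simp only [hBa, hS, Finset.mul_sum]
      rw [Finset.sum_comm]
      refine Finset.sum_congr rfl fun j _ => ?_
      rw [sq, ha, Finset.sum_mul]
      exact Finset.sum_congr rfl fun i _ => by ring
    have := Finset.sum_mul_sq_le_sq_mul_sq Finset.univ g (fun i => (B *ᵥ a) i)
    rw [hg, one_mul] at this
    rw [hgb]
    exact this
  -- step 2: ∑ i, ((B *ᵥ a) i)^2 = ∑ k, u k ^ 2 - a ⬝ᵥ (Λ *ᵥ a)
  have step2 : ∑ i, ((B *ᵥ a) i) ^ 2 = (∑ k, u k ^ 2) - a ⬝ᵥ (Λ *ᵥ a) := by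
    have e1 : ∑ i, ((B *ᵥ a) i) ^ 2 = a ⬝ᵥ ((Bᵀ * B) *ᵥ a) := by
      rw [← Matrix.mulVec_mulVec, Matrix.dotProduct_mulVec, Matrix.vecMul_transpose]
      simp [dotProduct, sq]
    have e2 : a ⬝ᵥ ((A * Aᵀ) *ᵥ a) = ∑ k, u k ^ 2 := by
      rw [← Matrix.mulVec_mulVec, Matrix.dotProduct_mulVec]
      simp only [Matrix.vecMul, Matrix.mulVec, dotProduct, Matrix.transpose_apply, hu]
      exact Finset.sum_congr rfl fun k _ => by
        rw [sq]; congr 1; exact Finset.sum_congr rfl fun j _ => mul_comm _ _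
    have e3 : (Bᵀ * B : Matrix (Fin r) (Fin r) ℝ) = A * Aᵀ - Λ := by
      rw [hΛ, sub_sub_cancel]
    rw [e1, e3, Matrix.sub_mulVec, dotProduct_sub, e2]
  -- step 3: spectral norm bound
  have step3 : -(specNorm Λ * S) ≤ a ⬝ᵥ (Λ *ᵥ a) := by
    have := specNorm_quad Λ a
    have h' := neg_abs_le (a ⬝ᵥ (Λ *ᵥ a))
    rw [hS]
    nlinarith [abs_nonneg (a ⬝ᵥ (Λ *ᵥ a))]
  -- u ⬝ v = T
  have huv : ∑ k, u k * v k = T := by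
    simp only [hu, hT, Finset.sum_mul]
    rw [Finset.sum_comm]
    refine Finset.sum_congr rfl fun j _ => ?_
    rw [hb, Finset.mul_sum]
    exact Finset.sum_congr rfl fun k _ => by ring
  -- step 4: Pythagoras
  have step4 : ∑ k, u k ^ 2 = T ^ 2 + ∑ k, (u k - T * v k) ^ 2 := by
    have expand : ∀ k : Fin n, (u k - T * v k) ^ 2
        = u k ^ 2 - 2 * T * (u k * v k) + T ^ 2 * v k ^ 2 := fun k => by ring
    have : ∑ k, (u k - T * v k) ^ 2
        = (∑ k, u k ^ 2) - 2 * T * (∑ k, u k * v k) + T ^ 2 * (∑ k, v k ^ 2) := by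
      rw [Finset.sum_congr rfl fun k _ => expand k, Finset.sum_add_distrib,
        Finset.sum_sub_distrib, ← Finset.mul_sum, ← Finset.mul_sum]
    rw [this, huv, hv]; ring
  -- residual column norms
  have hresid : ∀ j, (∑ k, (A j k - b j * v k) ^ 2)
      ≤ ε * ((∑ i, B i j ^ 2) + ∑ k, A j k ^ 2) := by
    intro j
    have hexp : ∑ k, (A j k - b j * v k) ^ 2 = (∑ k, A j k ^ 2) - b j ^ 2 := by
      have : ∀ k, (A j k - b j * v k) ^ 2
          = A j k ^ 2 - 2 * b j * (A j k * v k) + b j ^ 2 * v k ^ 2 := fun k => by ring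
      have hbj : ∑ i : Fin n, A j i * v i = b j := rfl
      rw [Finset.sum_congr rfl fun k _ => this k]
      rw [Finset.sum_add_distrib, Finset.sum_sub_distrib, ← Finset.mul_sum, ← Finset.mul_sum,
        hbj, hv]
      ring
    rw [hexp]
    -- use alignment hypothesis
    have hal := halign j
    have hZsq : ∑ i, Matrix.fromRows B Aᵀ i j ^ 2
        = (∑ i, B i j ^ 2) + ∑ k, A j k ^ 2 := by
      rw [Fintype.sum_sum_type]
      simp [Matrix.fromRows_apply_inl, Matrix.fromRows_apply_inr, Matrix.transpose_apply]
    have hZin : ∑ i, γ₁ i * Matrix.fromRows B Aᵀ i j = (Real.sqrt 2)⁻¹ * (a j + b j) := by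
      have haj : a j = ∑ i, g i * B i j := rfl
      have hbj : b j = ∑ k, A j k * v k := rfl
      rw [Fintype.sum_sum_type, hγ₁, haj, hbj, mul_add, Finset.mul_sum, Finset.mul_sum]
      congr 1
      · exact Finset.sum_congr rfl fun i _ => by
          simp only [Matrix.fromRows_apply_inl, Pi.smul_apply, Sum.elim_inl, smul_eq_mul]; ring
      · exact Finset.sum_congr rfl fun k _ => by
          simp only [Matrix.fromRows_apply_inr, Pi.smul_apply, Sum.elim_inr, smul_eq_mul,
            Matrix.transpose_apply]; ring
    have hsqrt : ((Real.sqrt 2)⁻¹) ^ 2 = 1 / 2 := by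
      rw [inv_pow, Real.sq_sqrt (by norm_num : (0:ℝ) ≤ 2)]; norm_num
    rw [hZsq, hZin] at hal
    have hal' : (1 - ε) * ((∑ i, B i j ^ 2) + ∑ k, A j k ^ 2)
        ≤ (a j + b j) ^ 2 / 2 := by
      calc (1 - ε) * ((∑ i, B i j ^ 2) + ∑ k, A j k ^ 2)
          ≤ ((Real.sqrt 2)⁻¹ * (a j + b j)) ^ 2 := hal
        _ = (a j + b j) ^ 2 / 2 := by rw [mul_pow, hsqrt]; ring
    have hab : (a j + b j) ^ 2 / 2 ≤ a j ^ 2 + b j ^ 2 := by nlinarith [sq_nonneg (a j - b j)]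
    have h1 := hacol j
    linarith
  -- step 5
  have step5 : ∑ k, (u k - T * v k) ^ 2 ≤ S * (ε * F) := by
    have hCS : ∀ k, (u k - T * v k) ^ 2
        ≤ S * ∑ j, (A j k - b j * v k) ^ 2 := by
      intro k
      have hform : u k - T * v k = ∑ j, a j * (A j k - b j * v k) := by
        simp only [hu, hT, mul_sub, Finset.sum_sub_distrib, Finset.sum_mul]
        congr 1
        exact Finset.sum_congr rfl fun j _ => by ring
      rw [hform]
      have := Finset.sum_mul_sq_le_sq_mul_sq Finset.univ a (fun j => A j k - b j * v k)
      rw [← hS] at this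
      exact this
    calc ∑ k, (u k - T * v k) ^ 2 ≤ ∑ k, S * ∑ j, (A j k - b j * v k) ^ 2 :=
          Finset.sum_le_sum fun k _ => hCS k
      _ = S * ∑ j, ∑ k, (A j k - b j * v k) ^ 2 := by
          rw [← Finset.mul_sum, Finset.sum_comm]
      _ ≤ S * (ε * F) := by
          apply mul_le_mul_of_nonneg_left _ hS0
          calc ∑ j, ∑ k, (A j k - b j * v k) ^ 2
              ≤ ∑ j, ε * ((∑ i, B i j ^ 2) + ∑ k, A j k ^ 2) :=
                Finset.sum_le_sum fun j _ => hresid j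
            _ = ε * ((∑ j, ∑ i, B i j ^ 2) + ∑ j, ∑ k, A j k ^ 2) := by
                rw [← Finset.mul_sum, Finset.sum_add_distrib]
            _ = ε * F := by
                rw [hF, frobSq, frobSq]
                have hc : (∑ j, ∑ i, B i j ^ 2) = ∑ i, ∑ j, B i j ^ 2 := Finset.sum_comm
                rw [hc]; ring
  -- combine
  clear_value a b u S T F
  have hSlF : S ≤ F := by
    have : frobSq B ≤ F := by rw [hF]; linarith
    linarith
  have hSεF : S * (ε * F) ≤ 2 * ε * F ^ 2 := by
    have h1 : S * (ε * F) ≤ F * (ε * F) :=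
      mul_le_mul_of_nonneg_right hSlF (mul_nonneg hε0 hF0)
    have h2 : F * (ε * F) = ε * F ^ 2 := by ring
    have h3 : (0:ℝ) ≤ ε * F ^ 2 := mul_nonneg hε0 (sq_nonneg F)
    linarith
  linarith [step1, step2, step3, step4, step5, hSεF]
end

section
/- Let w₁, w₂, s ∈ ℝ and let a₁, b₁, a₂, b₂ : ℝ → ℝ be differentiable functions. Define e(t) = s − w₂·b₁(t)a₁(t) − w₁·b₂(t)a₂(t) − b₁(t)a₁(t)b₂(t)a₂(t), and suppose for all t: ḃ₁ = (w₂ + b₂a₂)·e·a₁, ȧ₁ = (w₂ + b₂a₂)·e·b₁, ḃ₂ = (w₁ + b₁a₁)·e·a₂, ȧ₂ = (w₁ + b₁a₁)·e·b₂. Then for all t: d/dt ( ½·e(t)² ) = −e(t)²·( (w₂ + b₂a₂)²·(a₁² + b₁²) + (w₁ + b₁a₁)²·(a₂² + b₂²) ). -/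
/-- Along the decoupled singular-value dynamics of LoRA under spectral
initialization, the loss `½e²` decays with instantaneous rate
`e²((w₂+b₂a₂)²(a₁²+b₁²) + (w₁+b₁a₁)²(a₂²+b₂²))`. -/
theorem loss_decay_identity (w₁ w₂ s : ℝ)
    (a₁ b₁ a₂ b₂ : ℝ → ℝ)
    (e : ℝ → ℝ)
    (he : ∀ t, e t = s - w₂ * (b₁ t * a₁ t) - w₁ * (b₂ t * a₂ t)
      - b₁ t * a₁ t * (b₂ t * a₂ t))
    (hb₁ : ∀ t, HasDerivAt b₁ ((w₂ + b₂ t * a₂ t) * e t * a₁ t) t)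
    (ha₁ : ∀ t, HasDerivAt a₁ ((w₂ + b₂ t * a₂ t) * e t * b₁ t) t)
    (hb₂ : ∀ t, HasDerivAt b₂ ((w₁ + b₁ t * a₁ t) * e t * a₂ t) t)
    (ha₂ : ∀ t, HasDerivAt a₂ ((w₁ + b₁ t * a₁ t) * e t * b₂ t) t) :
    ∀ t, HasDerivAt (fun τ => (1 / 2) * e τ ^ 2)
      (-(e t ^ 2 * ((w₂ + b₂ t * a₂ t) ^ 2 * (a₁ t ^ 2 + b₁ t ^ 2)
        + (w₁ + b₁ t * a₁ t) ^ 2 * (a₂ t ^ 2 + b₂ t ^ 2)))) t := by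
  intro t
  have hefun : e = fun τ => s - w₂ * (b₁ τ * a₁ τ) - w₁ * (b₂ τ * a₂ τ)
      - b₁ τ * a₁ τ * (b₂ τ * a₂ τ) := funext he
  have he' : HasDerivAt e
      (-(e t * ((w₂ + b₂ t * a₂ t) ^ 2 * (a₁ t ^ 2 + b₁ t ^ 2)
        + (w₁ + b₁ t * a₁ t) ^ 2 * (a₂ t ^ 2 + b₂ t ^ 2)))) t := by
    rw [hefun]
    have h : HasDerivAt (fun τ => s - w₂ * (b₁ τ * a₁ τ) - w₁ * (b₂ τ * a₂ τ)
        - b₁ τ * a₁ τ * (b₂ τ * a₂ τ)) _ t := (((hb₁ t).mul (ha₁ t)).const_mul w₂).const_sub s |>.sub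
      (((hb₂ t).mul (ha₂ t)).const_mul w₁) |>.sub
      (((hb₁ t).mul (ha₁ t)).mul ((hb₂ t).mul (ha₂ t)))
    convert h using 1
    simp only [he, Pi.mul_apply]
    ring
  have h2 : HasDerivAt (fun τ => (1 / 2) * e τ ^ 2) _ t := (he'.pow 2).const_mul (1/2 : ℝ)
  convert h2 using 1
  push_cast
  ring
end

section
/- Let w₁, w₂, s ∈ ℝ with w₂ ≥ 0, let p* ≥ 0, and let a₁, b₁, a₂, b₂ : ℝ → ℝ be differentiable functions. Define e(t) = s − w₂·b₁(t)a₁(t) − w₁·b₂(t)a₂(t) − b₁(t)a₁(t)b₂(t)a₂(t), and suppose for all t: ḃ₁ = (w₂ + b₂a₂)·e·a₁, ȧ₁ = (w₂ + b₂a₂)·e·b₁, ḃ₂ = (w₁ + b₁a₁)·e·a₂, ȧ₂ = (w₁ + b₁a₁)·e·b₂. Suppose moreover that b₂(t)a₂(t) ≥ 0 and a₁(t)b₁(t) ≥ p* for all t ∈ [T₁, T]. Then for all t ∈ [T₁, T]: e(t)² ≤ exp(−4·w₂²·p*·(t − T₁))·e(T₁)². -/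
/-- Local convergence of the decoupled singular-value dynamics:
if `b₂a₂ ≥ 0` and `a₁b₁ ≥ p* ≥ 0` on `[T₁, T]`, then
`e(t)² ≤ exp(−4w₂²p*(t − T₁))·e(T₁)²` on `[T₁, T]`. -/
theorem scalar_local_convergence (w₁ w₂ s : ℝ) (hw₂ : 0 ≤ w₂)
    (pstar : ℝ) (hpstar : 0 ≤ pstar)
    (a₁ b₁ a₂ b₂ : ℝ → ℝ)
    (e : ℝ → ℝ)
    (he : ∀ t, e t = s - w₂ * (b₁ t * a₁ t) - w₁ * (b₂ t * a₂ t)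
      - b₁ t * a₁ t * (b₂ t * a₂ t))
    (hb₁ : ∀ t, HasDerivAt b₁ ((w₂ + b₂ t * a₂ t) * e t * a₁ t) t)
    (ha₁ : ∀ t, HasDerivAt a₁ ((w₂ + b₂ t * a₂ t) * e t * b₁ t) t)
    (hb₂ : ∀ t, HasDerivAt b₂ ((w₁ + b₁ t * a₁ t) * e t * a₂ t) t)
    (ha₂ : ∀ t, HasDerivAt a₂ ((w₁ + b₁ t * a₁ t) * e t * b₂ t) t)
    (T₁ T : ℝ)
    (hba₂ : ∀ t ∈ Set.Icc T₁ T, 0 ≤ b₂ t * a₂ t)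
    (hab₁ : ∀ t ∈ Set.Icc T₁ T, pstar ≤ a₁ t * b₁ t) :
    ∀ t ∈ Set.Icc T₁ T,
      e t ^ 2 ≤ Real.exp (-(4 * w₂ ^ 2 * pstar * (t - T₁))) * e T₁ ^ 2 := by
  set c : ℝ := 4 * w₂ ^ 2 * pstar with hc
  set D : ℝ → ℝ := fun t =>
    (w₂ + b₂ t * a₂ t) ^ 2 * (a₁ t ^ 2 + b₁ t ^ 2) +
      (w₁ + b₁ t * a₁ t) ^ 2 * (a₂ t ^ 2 + b₂ t ^ 2) with hD
  have he' : ∀ t, HasDerivAt e (-(e t) * D t) t := by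
    intro t
    have hE : e = fun t => s - w₂ * (b₁ t * a₁ t) - w₁ * (b₂ t * a₂ t)
        - b₁ t * a₁ t * (b₂ t * a₂ t) := funext he
    have Hp : HasDerivAt (fun t => b₁ t * a₁ t)
        (((w₂ + b₂ t * a₂ t) * e t * a₁ t) * a₁ t +
          b₁ t * ((w₂ + b₂ t * a₂ t) * e t * b₁ t)) t := (hb₁ t).mul (ha₁ t)
    have Hq : HasDerivAt (fun t => b₂ t * a₂ t)
        (((w₁ + b₁ t * a₁ t) * e t * a₂ t) * a₂ t +
          b₂ t * ((w₁ + b₁ t * a₁ t) * e t * b₂ t)) t := (hb₂ t).mul (ha₂ t)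
    have H := (((hasDerivAt_const t s).sub (Hp.const_mul w₂)).sub
        (Hq.const_mul w₁)).sub (Hp.mul Hq)
    have hE' : e = ((((fun x => s) - fun y => w₂ * (b₁ y * a₁ y)) - fun y => w₁ * (b₂ y * a₂ y)) -
        (fun t => b₁ t * a₁ t) * fun t => b₂ t * a₂ t) := hE
    rw [← hE'] at H
    convert H using 1
    any_goals rfl
    simp only [hD]
    ring
  -- g t = exp (c*(t-T₁)) * e t ^ 2
  set g : ℝ → ℝ := fun t => Real.exp (c * (t - T₁)) * e t ^ 2 with hg
  have hg' : ∀ t, HasDerivAt g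
      (Real.exp (c * (t - T₁)) * (c * 1) * e t ^ 2 +
        Real.exp (c * (t - T₁)) * ((2 : ℕ) * e t ^ 1 * (-(e t) * D t))) t := by
    intro t
    exact ((((hasDerivAt_id t).sub_const T₁).const_mul c).exp).mul ((he' t).pow 2)
  have hanti : AntitoneOn g (Set.Icc T₁ T) := by
    apply antitoneOn_of_deriv_nonpos (convex_Icc T₁ T)
    · exact fun x _ => ((hg' x).continuousAt).continuousWithinAt
    · intro x hx
      exact ((hg' x).differentiableAt).differentiableWithinAt
    · intro x hx
      rw [interior_Icc] at hx
      have hx' : x ∈ Set.Icc T₁ T := Set.Ioo_subset_Icc_self hx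
      rw [(hg' x).deriv]
      have h1 : 0 ≤ b₂ x * a₂ x := hba₂ x hx'
      have h2 : pstar ≤ a₁ x * b₁ x := hab₁ x hx'
      have hDlb : 2 * w₂ ^ 2 * pstar ≤ D x := by
        simp only [hD]
        nlinarith [sq_nonneg (a₁ x - b₁ x), sq_nonneg (a₁ x + b₁ x),
          sq_nonneg (w₁ + b₁ x * a₁ x), sq_nonneg (a₂ x), sq_nonneg (b₂ x),
          sq_nonneg w₂, mul_nonneg hw₂ h1, sq_nonneg (b₂ x * a₂ x),
          mul_nonneg (mul_nonneg hw₂ hw₂) h1]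
      have hexp : (0:ℝ) < Real.exp (c * (x - T₁)) := Real.exp_pos _
      have : Real.exp (c * (x - T₁)) * (c * 1) * e x ^ 2 +
          Real.exp (c * (x - T₁)) * ((2 : ℕ) * e x ^ 1 * (-(e x) * D x)) =
          Real.exp (c * (x - T₁)) * (e x ^ 2 * (c - 2 * D x)) := by
        push_cast; ring
      rw [this]
      apply mul_nonpos_of_nonneg_of_nonpos (le_of_lt hexp)
      apply mul_nonpos_of_nonneg_of_nonpos (sq_nonneg _)
      nlinarith
  intro t ht
  have hT₁ : T₁ ∈ Set.Icc T₁ T := Set.left_mem_Icc.mpr (le_trans ht.1 ht.2)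
  have hgle : g t ≤ g T₁ := hanti hT₁ ht ht.1
  simp only [hg] at hgle
  rw [sub_self, mul_zero, Real.exp_zero, one_mul] at hgle
  have hexp : (0:ℝ) < Real.exp (c * (t - T₁)) := Real.exp_pos _
  have : e t ^ 2 = Real.exp (-(c * (t - T₁))) * (Real.exp (c * (t - T₁)) * e t ^ 2) := by
    rw [← mul_assoc, ← Real.exp_add, neg_add_cancel, Real.exp_zero, one_mul]
  rw [this, hc]
  exact mul_le_mul_of_nonneg_left hgle (le_of_lt (Real.exp_pos _))
end

section
/- Let W₁ = W₂ = [[10,0],[0,1]] ∈ ℝ^{2×2}, let Y ∈ ℝ^{2×2} be such that the first column of ΔY := Y − W₂W₁ is zero, and let r = 1. Define L(A₁,A₂,B₁,B₂) = ½‖Y − (W₂+B₂A₂)(W₁+B₁A₁)‖_F² for A₁ ∈ ℝ^{1×2}, B₁ ∈ ℝ^{2×1}, A₂ ∈ ℝ^{1×2}, B₂ ∈ ℝ^{2×1}. Then for any scalars a₁, a₂ ∈ ℝ, the point (A₁, A₂, B₁, B₂) = (a₁·e₁ᵀ, a₂·e₁ᵀ, 0, 0), where e₁ = (1,0)ᵀ,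 is a critical point of L (all Fréchet partial derivatives of L vanish there), and L at this point equals ½‖ΔY‖_F². Consequently, the gradient flow of L started at this point is constant, and the loss remains equal to ½‖ΔY‖_F² for all time. -/
open Matrix

attribute [local instance] Matrix.frobeniusNormedAddCommGroup Matrix.frobeniusNormedSpace

section SpectralAux
def m1 (x : Fin 8 → ℝ) : Matrix (Fin 1) (Fin 2) ℝ := !![x 0, x 1]
def m2 (x : Fin 8 → ℝ) : Matrix (Fin 1) (Fin 2) ℝ := !![x 2, x 3]
def m3 (x : Fin 8 → ℝ) : Matrix (Fin 2) (Fin 1) ℝ := !![x 4; x 5]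
def m4 (x : Fin 8 → ℝ) : Matrix (Fin 2) (Fin 1) ℝ := !![x 6; x 7]
def packM (A₁ A₂ : Matrix (Fin 1) (Fin 2) ℝ) (B₁ B₂ : Matrix (Fin 2) (Fin 1) ℝ) : Fin 8 → ℝ :=
  ![A₁ 0 0, A₁ 0 1, A₂ 0 0, A₂ 0 1, B₁ 0 0, B₁ 1 0, B₂ 0 0, B₂ 1 0]
noncomputable def Efun (W Y : Matrix (Fin 2) (Fin 2) ℝ) (x : Fin 8 → ℝ) : Matrix (Fin 2) (Fin 2) ℝ :=
  Y - (W + m4 x * m2 x) * (W + m3 x * m1 x)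
noncomputable def vf (W Y : Matrix (Fin 2) (Fin 2) ℝ) (x : Fin 8 → ℝ) : Fin 8 → ℝ :=
  packM ((m3 x)ᵀ * (W + m4 x * m2 x)ᵀ * Efun W Y x)
        ((m4 x)ᵀ * Efun W Y x * (W + m3 x * m1 x)ᵀ)
        ((W + m4 x * m2 x)ᵀ * Efun W Y x * (m1 x)ᵀ)
        (Efun W Y x * (W + m3 x * m1 x)ᵀ * (m2 x)ᵀ)

lemma vf_contDiff (W Y : Matrix (Fin 2) (Fin 2) ℝ) : ContDiff ℝ 1 (vf W Y) := by
  rw [contDiff_pi]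
  intro i
  fin_cases i
  · show ContDiff ℝ 1 fun x => ((m3 x)ᵀ * (W + m4 x * m2 x)ᵀ * Efun W Y x) 0 0
    simp [Efun, m1, m2, m3, m4, Matrix.mul_apply, Fin.sum_univ_succ,
      Matrix.transpose_apply, Matrix.vecHead, Matrix.vecTail]
    fun_prop
  · show ContDiff ℝ 1 fun x => ((m3 x)ᵀ * (W + m4 x * m2 x)ᵀ * Efun W Y x) 0 1
    simp [Efun, m1, m2, m3, m4, Matrix.mul_apply, Fin.sum_univ_succ,
      Matrix.transpose_apply, Matrix.vecHead, Matrix.vecTail]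
    fun_prop
  · show ContDiff ℝ 1 fun x => ((m4 x)ᵀ * Efun W Y x * (W + m3 x * m1 x)ᵀ) 0 0
    simp [Efun, m1, m2, m3, m4, Matrix.mul_apply, Fin.sum_univ_succ,
      Matrix.transpose_apply, Matrix.vecHead, Matrix.vecTail]
    fun_prop
  · show ContDiff ℝ 1 fun x => ((m4 x)ᵀ * Efun W Y x * (W + m3 x * m1 x)ᵀ) 0 1
    simp [Efun, m1, m2, m3, m4, Matrix.mul_apply, Fin.sum_univ_succ,
      Matrix.transpose_apply, Matrix.vecHead, Matrix.vecTail]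
    fun_prop
  · show ContDiff ℝ 1 fun x => ((W + m4 x * m2 x)ᵀ * Efun W Y x * (m1 x)ᵀ) 0 0
    simp [Efun, m1, m2, m3, m4, Matrix.mul_apply, Fin.sum_univ_succ,
      Matrix.transpose_apply, Matrix.vecHead, Matrix.vecTail]
    fun_prop
  · show ContDiff ℝ 1 fun x => ((W + m4 x * m2 x)ᵀ * Efun W Y x * (m1 x)ᵀ) 1 0
    simp [Efun, m1, m2, m3, m4, Matrix.mul_apply, Fin.sum_univ_succ,
      Matrix.transpose_apply, Matrix.vecHead, Matrix.vecTail]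
    fun_prop
  · show ContDiff ℝ 1 fun x => (Efun W Y x * (W + m3 x * m1 x)ᵀ * (m2 x)ᵀ) 0 0
    simp [Efun, m1, m2, m3, m4, Matrix.mul_apply, Fin.sum_univ_succ,
      Matrix.transpose_apply, Matrix.vecHead, Matrix.vecTail]
    fun_prop
  · show ContDiff ℝ 1 fun x => (Efun W Y x * (W + m3 x * m1 x)ᵀ * (m2 x)ᵀ) 1 0
    simp [Efun, m1, m2, m3, m4, Matrix.mul_apply, Fin.sum_univ_succ,
      Matrix.transpose_apply, Matrix.vecHead, Matrix.vecTail]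
    fun_prop

noncomputable def entryCLM (i : Fin 2) : Matrix (Fin 2) (Fin 1) ℝ →L[ℝ] ℝ :=
  LinearMap.toContinuousLinearMap
    { toFun := fun B => B i 0
      map_add' := fun _ _ => rfl
      map_smul' := fun _ _ => rfl }

lemma hasFDerivAt_sq_entry (i : Fin 2) :
    HasFDerivAt (fun B : Matrix (Fin 2) (Fin 1) ℝ => B i 0 ^ 2)
      (0 : Matrix (Fin 2) (Fin 1) ℝ →L[ℝ] ℝ) 0 := by
  have hcoord : HasFDerivAt (fun B : Matrix (Fin 2) (Fin 1) ℝ => B i 0) (entryCLM i) 0 :=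
    (entryCLM i).hasFDerivAt
  have h := hcoord.mul hcoord
  simp only [Matrix.zero_apply, zero_smul, smul_zero, add_zero, zero_add] at h
  refine (h.congr_fderiv ?_).congr_of_eventuallyEq (Filter.Eventually.of_forall fun B => ?_)
  · ext B; change (0:ℝ) * entryCLM i B + (0:ℝ) * entryCLM i B = 0; simp
  · simp [pow_two]


end SpectralAux

/-- For the pre-trained weights `W₁ = W₂ = [[10,0],[0,1]]` and a
fine-tuning target `Y` whose update `ΔY = Y − W₂W₁` has zero first column, the rank-one
spectral LoRA initialization `(A₁, A₂, B₁, B₂) = (a₁e₁ᵀ, a₂e₁ᵀ, 0, 0)` is a critical point of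
`L` (all Fréchet partial derivatives vanish), the loss there equals `½‖ΔY‖_F²`, and any
gradient-flow trajectory started at this point is constant with loss `½‖ΔY‖_F²` forever. -/
theorem spectral_init_failure
    (W : Matrix (Fin 2) (Fin 2) ℝ) (hW : W = !![10, 0; 0, 1])
    (Y : Matrix (Fin 2) (Fin 2) ℝ)
    (ΔY : Matrix (Fin 2) (Fin 2) ℝ) (hΔY : ΔY = Y - W * W)
    (hcol : ∀ i, ΔY i 0 = 0)
    (L : Matrix (Fin 1) (Fin 2) ℝ → Matrix (Fin 1) (Fin 2) ℝ →
      Matrix (Fin 2) (Fin 1) ℝ → Matrix (Fin 2) (Fin 1) ℝ → ℝ)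
    (hL : ∀ A₁ A₂ B₁ B₂, L A₁ A₂ B₁ B₂
      = (1 / 2) * frobSq (Y - (W + B₂ * A₂) * (W + B₁ * A₁)))
    (a₁ a₂ : ℝ) :
    HasFDerivAt (fun A₁ => L A₁ !![a₂, 0] 0 0)
      (0 : Matrix (Fin 1) (Fin 2) ℝ →L[ℝ] ℝ) !![a₁, 0] ∧
    HasFDerivAt (fun A₂ => L !![a₁, 0] A₂ 0 0)
      (0 : Matrix (Fin 1) (Fin 2) ℝ →L[ℝ] ℝ) !![a₂, 0] ∧
    HasFDerivAt (fun B₁ => L !![a₁, 0] !![a₂, 0] B₁ 0)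
      (0 : Matrix (Fin 2) (Fin 1) ℝ →L[ℝ] ℝ) 0 ∧
    HasFDerivAt (fun B₂ => L !![a₁, 0] !![a₂, 0] 0 B₂)
      (0 : Matrix (Fin 2) (Fin 1) ℝ →L[ℝ] ℝ) 0 ∧
    L !![a₁, 0] !![a₂, 0] 0 0 = (1 / 2) * frobSq ΔY ∧
    (∀ (A₁c A₂c : ℝ → Matrix (Fin 1) (Fin 2) ℝ)
       (B₁c B₂c : ℝ → Matrix (Fin 2) (Fin 1) ℝ)
       (E : ℝ → Matrix (Fin 2) (Fin 2) ℝ),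
      (∀ t, E t = Y - (W + B₂c t * A₂c t) * (W + B₁c t * A₁c t)) →
      (∀ t i j, HasDerivAt (fun τ => A₁c τ i j)
        (((B₁c t)ᵀ * (W + B₂c t * A₂c t)ᵀ * E t) i j) t) →
      (∀ t i j, HasDerivAt (fun τ => B₁c τ i j)
        (((W + B₂c t * A₂c t)ᵀ * E t * (A₁c t)ᵀ) i j) t) →
      (∀ t i j, HasDerivAt (fun τ => A₂c τ i j)
        (((B₂c t)ᵀ * E t * (W + B₁c t * A₁c t)ᵀ) i j) t) →
      (∀ t i j, HasDerivAt (fun τ => B₂c τ i j)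
        ((E t * (W + B₁c t * A₁c t)ᵀ * (A₂c t)ᵀ) i j) t) →
      A₁c 0 = !![a₁, 0] → A₂c 0 = !![a₂, 0] → B₁c 0 = 0 → B₂c 0 = 0 →
      ∀ t, A₁c t = !![a₁, 0] ∧ A₂c t = !![a₂, 0] ∧ B₁c t = 0 ∧ B₂c t = 0 ∧
        L (A₁c t) (A₂c t) (B₁c t) (B₂c t) = (1 / 2) * frobSq ΔY) := by
  subst hΔY
  subst hW
  have e0 : Y 0 0 = 100 := by
    have := hcol 0
    simp [Matrix.mul_apply, Fin.sum_univ_two] at this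
    linarith
  have e1 : Y 1 0 = 0 := by
    have := hcol 1
    simp [Matrix.mul_apply, Fin.sum_univ_two] at this
    linarith
  set W : Matrix (Fin 2) (Fin 2) ℝ := !![10, 0; 0, 1] with hW
  have hc1 : (fun A₁ : Matrix (Fin 1) (Fin 2) ℝ => L A₁ !![a₂, 0] 0 0)
      = fun _ => L !![a₁, 0] !![a₂, 0] 0 0 := by
    funext A
    rw [hL, hL]
    simp
  have hc2 : (fun A₂ : Matrix (Fin 1) (Fin 2) ℝ => L !![a₁, 0] A₂ 0 0)
      = fun _ => L !![a₁, 0] !![a₂, 0] 0 0 := by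
    funext A
    rw [hL, hL]
    simp
  have hval : L !![a₁, 0] !![a₂, 0] 0 0 = (1 / 2) * frobSq (Y - W * W) := by
    rw [hL]; simp
  have key3 : (fun B : Matrix (Fin 2) (Fin 1) ℝ => L !![a₁, 0] !![a₂, 0] B 0)
      = fun B => L !![a₁, 0] !![a₂, 0] 0 0
          + ((50 * a₁ ^ 2) * (B 0 0) ^ 2 + (a₁ ^ 2 / 2) * (B 1 0) ^ 2) := by
    funext B
    rw [hL, hL]
    simp [frobSq, Fin.sum_univ_succ, Matrix.mul_apply, Matrix.vecMul, dotProduct, Matrix.vecHead, Matrix.vecTail, hW, e0, e1]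
    ring
  have key4 : (fun B : Matrix (Fin 2) (Fin 1) ℝ => L !![a₁, 0] !![a₂, 0] 0 B)
      = fun B => L !![a₁, 0] !![a₂, 0] 0 0
          + ((50 * a₂ ^ 2) * (B 0 0) ^ 2 + (50 * a₂ ^ 2) * (B 1 0) ^ 2) := by
    funext B
    rw [hL, hL]
    simp [frobSq, Fin.sum_univ_succ, Matrix.mul_apply, Matrix.vecMul, dotProduct, Matrix.vecHead, Matrix.vecTail, hW, e0, e1]
    ring
  have quad : ∀ c1 c2 : ℝ, ∀ C : ℝ, HasFDerivAt
      (fun B : Matrix (Fin 2) (Fin 1) ℝ => C + (c1 * (B 0 0) ^ 2 + c2 * (B 1 0) ^ 2))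
      (0 : Matrix (Fin 2) (Fin 1) ℝ →L[ℝ] ℝ) 0 := by
    intro c1 c2 C
    have h1 := (hasFDerivAt_sq_entry 0).const_mul c1
    have h2 := (hasFDerivAt_sq_entry 1).const_mul c2
    have h := (h1.add h2).const_add C
    exact h.congr_fderiv (by ext B; change c1 * (0:ℝ) + c2 * (0:ℝ) = 0; simp)
  refine ⟨?_, ?_, ?_, ?_, hval, ?_⟩
  · rw [hc1]; exact hasFDerivAt_const _ _
  · rw [hc2]; exact hasFDerivAt_const _ _
  · rw [key3]; exact quad _ _ _
  · rw [key4]; exact quad _ _ _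
  intro A₁c A₂c B₁c B₂c E hE hA₁ hB₁ hA₂ hB₂ h01 h02 h03 h04 t
  -- the packaged trajectory
  set z : ℝ → (Fin 8 → ℝ) := fun τ => packM (A₁c τ) (A₂c τ) (B₁c τ) (B₂c τ) with hzdef
  set x₀ : Fin 8 → ℝ := ![a₁, 0, a₂, 0, 0, 0, 0, 0] with hx₀def
  have hz0 : z 0 = x₀ := by
    show packM (A₁c 0) (A₂c 0) (B₁c 0) (B₂c 0) = x₀
    rw [h01, h02, h03, h04]
    funext i
    fin_cases i <;> rfl
  have hm1 : ∀ τ, m1 (z τ) = A₁c τ := fun τ => by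
    ext i j; fin_cases i <;> fin_cases j <;> rfl
  have hm2 : ∀ τ, m2 (z τ) = A₂c τ := fun τ => by
    ext i j; fin_cases i <;> fin_cases j <;> rfl
  have hm3 : ∀ τ, m3 (z τ) = B₁c τ := fun τ => by
    ext i j; fin_cases i <;> fin_cases j <;> rfl
  have hm4 : ∀ τ, m4 (z τ) = B₂c τ := fun τ => by
    ext i j; fin_cases i <;> fin_cases j <;> rfl
  have hEz : ∀ τ, Efun W Y (z τ) = E τ := fun τ => by
    simp only [Efun, hm1, hm2, hm3, hm4]
    exact (hE τ).symm
  have hvz : ∀ τ, vf W Y (z τ) = packM ((B₁c τ)ᵀ * (W + B₂c τ * A₂c τ)ᵀ * E τ)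
      ((B₂c τ)ᵀ * E τ * (W + B₁c τ * A₁c τ)ᵀ)
      ((W + B₂c τ * A₂c τ)ᵀ * E τ * (A₁c τ)ᵀ)
      (E τ * (W + B₁c τ * A₁c τ)ᵀ * (A₂c τ)ᵀ) := fun τ => by
    simp only [vf, hm1, hm2, hm3, hm4, hEz]
  have hzderiv : ∀ τ, HasDerivAt z (vf W Y (z τ)) τ := by
    intro τ
    rw [hvz τ]
    apply hasDerivAt_pi.mpr
    intro i
    fin_cases i
    · exact hA₁ τ 0 0
    · exact hA₁ τ 0 1
    · exact hA₂ τ 0 0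
    · exact hA₂ τ 0 1
    · exact hB₁ τ 0 0
    · exact hB₁ τ 1 0
    · exact hB₂ τ 0 0
    · exact hB₂ τ 1 0
  have hzcont : Continuous z := continuous_iff_continuousAt.mpr fun τ => (hzderiv τ).continuousAt
  -- the vector field vanishes at the initial point
  have hx0 : x₀ 0 = a₁ := rfl
  have hx1 : x₀ 1 = 0 := rfl
  have hx2 : x₀ 2 = a₂ := rfl
  have hx3 : x₀ 3 = 0 := rfl
  have hx4 : x₀ 4 = 0 := rfl
  have hx5 : x₀ 5 = 0 := rfl
  have hx6 : x₀ 6 = 0 := rfl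
  have hx7 : x₀ 7 = 0 := rfl
  have hv0 : vf W Y x₀ = 0 := by
    funext i
    fin_cases i
    · show ((m3 x₀)ᵀ * (W + m4 x₀ * m2 x₀)ᵀ * Efun W Y x₀) 0 0 = 0
      norm_num [Efun, m1, m2, m3, m4, Matrix.mul_apply, Fin.sum_univ_succ, hW,
        hx0, hx1, hx2, hx3, hx4, hx5, hx6, hx7, e0, e1]
    · show ((m3 x₀)ᵀ * (W + m4 x₀ * m2 x₀)ᵀ * Efun W Y x₀) 0 1 = 0
      norm_num [Efun, m1, m2, m3, m4, Matrix.mul_apply, Fin.sum_univ_succ, hW,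
        hx0, hx1, hx2, hx3, hx4, hx5, hx6, hx7, e0, e1]
    · show ((m4 x₀)ᵀ * Efun W Y x₀ * (W + m3 x₀ * m1 x₀)ᵀ) 0 0 = 0
      norm_num [Efun, m1, m2, m3, m4, Matrix.mul_apply, Fin.sum_univ_succ, hW,
        hx0, hx1, hx2, hx3, hx4, hx5, hx6, hx7, e0, e1]
    · show ((m4 x₀)ᵀ * Efun W Y x₀ * (W + m3 x₀ * m1 x₀)ᵀ) 0 1 = 0
      norm_num [Efun, m1, m2, m3, m4, Matrix.mul_apply, Fin.sum_univ_succ, hW,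
        hx0, hx1, hx2, hx3, hx4, hx5, hx6, hx7, e0, e1]
    · show ((W + m4 x₀ * m2 x₀)ᵀ * Efun W Y x₀ * (m1 x₀)ᵀ) 0 0 = 0
      norm_num [Efun, m1, m2, m3, m4, Matrix.mul_apply, Fin.sum_univ_succ, hW,
        hx0, hx1, hx2, hx3, hx4, hx5, hx6, hx7, e0, e1]
    · show ((W + m4 x₀ * m2 x₀)ᵀ * Efun W Y x₀ * (m1 x₀)ᵀ) 1 0 = 0
      norm_num [Efun, m1, m2, m3, m4, Matrix.mul_apply, Fin.sum_univ_succ, hW,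
        hx0, hx1, hx2, hx3, hx4, hx5, hx6, hx7, e0, e1]
    · show (Efun W Y x₀ * (W + m3 x₀ * m1 x₀)ᵀ * (m2 x₀)ᵀ) 0 0 = 0
      norm_num [Efun, m1, m2, m3, m4, Matrix.mul_apply, Fin.sum_univ_succ, hW,
        hx0, hx1, hx2, hx3, hx4, hx5, hx6, hx7, e0, e1]
    · show (Efun W Y x₀ * (W + m3 x₀ * m1 x₀)ᵀ * (m2 x₀)ᵀ) 1 0 = 0
      norm_num [Efun, m1, m2, m3, m4, Matrix.mul_apply, Fin.sum_univ_succ, hW,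
        hx0, hx1, hx2, hx3, hx4, hx5, hx6, hx7, e0, e1]
  -- uniqueness of the ODE solution on a large interval
  have hT : (0:ℝ) < |t| + 1 := by positivity
  obtain ⟨R, hR⟩ := (isCompact_Icc (a := -(|t| + 1)) (b := |t| + 1)).exists_bound_of_continuousOn
    ((hzcont.sub continuous_const).continuousOn (f := fun τ => z τ - x₀))
  set s : Set (Fin 8 → ℝ) := Metric.closedBall x₀ (max R 0) with hsdef
  have hdiff := (vf_contDiff W Y).differentiable one_ne_zero
  have hfc : Continuous (fderiv ℝ (vf W Y)) := (vf_contDiff W Y).continuous_fderiv one_ne_zero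
  obtain ⟨C, hC⟩ := (isCompact_closedBall x₀ (max R 0)).exists_bound_of_continuousOn
    hfc.continuousOn
  have hlip : LipschitzOnWith ⟨max C 0, le_max_right _ _⟩ (vf W Y) s :=
    (convex_closedBall _ _).lipschitzOnWith_of_nnnorm_fderiv_le (fun x _ => hdiff x)
      (fun x hx => by
        have h2 : ‖fderiv ℝ (vf W Y) x‖ ≤ max C 0 := (hC x hx).trans (le_max_left C 0)
        exact_mod_cast h2)
  have hzt : z t = x₀ := by
    have key := ODE_solution_unique_of_mem_Icc
      (v := fun _ x => vf W Y x) (s := fun _ => s)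
      (fun _ _ => hlip)
      (show (0:ℝ) ∈ Set.Ioo (-(|t| + 1)) (|t| + 1) by simp only [Set.mem_Ioo]; constructor <;> linarith [abs_nonneg t])
      (hzcont.continuousOn)
      (fun τ _ => hzderiv τ)
      (fun τ hτ => by
        rw [hsdef, Metric.mem_closedBall, dist_eq_norm]
        exact (hR τ ⟨le_of_lt hτ.1, le_of_lt hτ.2⟩).trans (le_max_left R 0))
      (continuousOn_const (c := x₀))
      (fun τ _ => by
        show HasDerivAt (fun _ : ℝ => x₀) (vf W Y x₀) τ
        rw [hv0]
        exact hasDerivAt_const τ x₀)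
      (fun τ _ => Metric.mem_closedBall_self (le_max_right R 0))
      (by rw [hz0])
    have ht : t ∈ Set.Icc (-(|t| + 1)) (|t| + 1) := by
      constructor
      · have := neg_abs_le t; linarith
      · have := le_abs_self t; linarith
    exact key ht
  have hA1t : A₁c t = !![a₁, 0] := by
    ext i j; fin_cases i <;> fin_cases j
    · exact congrFun hzt 0
    · exact congrFun hzt 1
  have hA2t : A₂c t = !![a₂, 0] := by
    ext i j; fin_cases i <;> fin_cases j
    · exact congrFun hzt 2
    · exact congrFun hzt 3
  have hB1t : B₁c t = 0 := by
    ext i j; fin_cases i <;> fin_cases j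
    · exact congrFun hzt 4
    · exact congrFun hzt 5
  have hB2t : B₂c t = 0 := by
    ext i j; fin_cases i <;> fin_cases j
    · exact congrFun hzt 6
    · exact congrFun hzt 7
  refine ⟨hA1t, hA2t, hB1t, hB2t, ?_⟩
  rw [hA1t, hA2t, hB1t, hB2t]
  exact hval
end
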